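/- arXiv:1804.07560 — 4 statements merged into one kernel-verified Lean document; each statement's English description precedes it below -/
import Mathlib

section
/- Let d ≥ 0 and λ_0,...,λ_d be integers with Σ_{i=0}^d λ_i > 0. Then for every infinite set A ⊆ ℕ, limsup_{n→∞} |Σ_{i=0}^d λ_i·R_A(n-i)| ≥ limsup_{n→∞} (Σ_{i=0}^d λ_i)/(2(d+1)^2) · (B(A,λ,n)/√n)^2. -/
open Filter Finset
open scoped Classical

/-- Number of ordered pairs (a,a') with a,a' ∈ A and a+a' = n. -/
noncomputable def Rf (A : Set ℕ) (n : ℕ) : ℕ :=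
  Nat.card {p : ℕ × ℕ | p.1 ∈ A ∧ p.2 ∈ A ∧ p.1 + p.2 = n}

/-- Rf extended to ℤ by 0 on negatives. -/
noncomputable def Rz (A : Set ℕ) (k : ℤ) : ℕ :=
  if 0 ≤ k then Rf A k.toNat else 0

/-- Counting function A(n) = #{a ∈ A : a ≤ n}. -/
noncomputable def cnt (A : Set ℕ) (n : ℕ) : ℕ :=
  Nat.card {a : ℕ | a ∈ A ∧ a ≤ n}

/-- Characteristic function of A, extended by 0 to negative integers. -/
noncomputable def chi (A : Set ℕ) (k : ℤ) : ℤ :=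
  if 0 ≤ k ∧ k.toNat ∈ A then 1 else 0

/-- B(A, λ, n) = #{m ≤ n : ∑_{i=0}^d λ_i χ_A(m-i) ≠ 0}. -/
noncomputable def Bf (A : Set ℕ) (lam : ℕ → ℤ) (d : ℕ) (n : ℕ) : ℕ :=
  Nat.card {m : ℕ | m ≤ n ∧ ∑ i ∈ Finset.range (d+1), lam i * chi A ((m : ℤ) - i) ≠ 0}

/-- Finset for Rf -/
noncomputable def RFin (A : Set ℕ) (m : ℕ) : Finset (ℕ × ℕ) :=
  (Finset.range (m+1) ×ˢ Finset.range (m+1)).filter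
    (fun p => p.1 ∈ A ∧ p.2 ∈ A ∧ p.1 + p.2 = m)

noncomputable def cntFin (A : Set ℕ) (n : ℕ) : Finset ℕ :=
  (Finset.range (n+1)).filter (· ∈ A)

lemma Rf_eq (A : Set ℕ) (m : ℕ) : Rf A m = (RFin A m).card := by
  have h : {p : ℕ × ℕ | p.1 ∈ A ∧ p.2 ∈ A ∧ p.1 + p.2 = m} = ↑(RFin A m) := by
    ext p
    simp only [RFin, Finset.coe_filter, Finset.mem_product, Finset.mem_range, Set.mem_setOf_eq]
    constructor
    · rintro ⟨h1, h2, h3⟩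
      exact ⟨⟨by omega, by omega⟩, h1, h2, h3⟩
    · rintro ⟨_, h⟩; exact h
  rw [Rf, h, Nat.card_coe_set_eq, Set.ncard_coe_finset]

lemma cnt_eq (A : Set ℕ) (n : ℕ) : cnt A n = (cntFin A n).card := by
  have h : {a : ℕ | a ∈ A ∧ a ≤ n} = ↑(cntFin A n) := by
    ext a
    simp only [cntFin, Finset.coe_filter, Finset.mem_range, Set.mem_setOf_eq]
    constructor
    · rintro ⟨h1, h2⟩; exact ⟨by omega, h1⟩
    · rintro ⟨h1, h2⟩; exact ⟨h2, by omega⟩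
  rw [cnt, h, Nat.card_coe_set_eq, Set.ncard_coe_finset]

lemma Bf_eq (A : Set ℕ) (lam : ℕ → ℤ) (d n : ℕ) :
    Bf A lam d n = ((Finset.range (n+1)).filter
      (fun m : ℕ => ∑ i ∈ Finset.range (d+1), lam i * chi A ((m : ℤ) - i) ≠ 0)).card := by
  have h : {m : ℕ | m ≤ n ∧ ∑ i ∈ Finset.range (d+1), lam i * chi A ((m : ℤ) - i) ≠ 0}
      = ↑((Finset.range (n+1)).filter
      (fun m : ℕ => ∑ i ∈ Finset.range (d+1), lam i * chi A ((m : ℤ) - i) ≠ 0)) := by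
    ext m
    simp only [Finset.coe_filter, Finset.mem_range, Set.mem_setOf_eq, Nat.lt_succ_iff]
  rw [Bf, h, Nat.card_coe_set_eq, Set.ncard_coe_finset]

noncomputable def Dn (A : Set ℕ) (K : ℕ) : ℕ := ∑ m ∈ Finset.range (K+1), Rf A m

lemma cnt_mono (A : Set ℕ) {m n : ℕ} (h : m ≤ n) : cnt A m ≤ cnt A n := by
  rw [cnt_eq, cnt_eq]
  apply Finset.card_le_card
  apply Finset.filter_subset_filter
  exact Finset.range_subset_range.2 (by omega)

lemma cnt_le (A : Set ℕ) (n : ℕ) : cnt A n ≤ n + 1 := by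
  rw [cnt_eq]
  calc (cntFin A n).card ≤ (Finset.range (n+1)).card := Finset.card_le_card (Finset.filter_subset _ _)
  _ = n + 1 := Finset.card_range _

lemma Rf_le_cnt (A : Set ℕ) {m N : ℕ} (h : m ≤ N) : Rf A m ≤ cnt A N := by
  rw [Rf_eq, cnt_eq]
  apply Finset.card_le_card_of_injOn (fun p => p.1)
  · intro p hp
    simp only [RFin, Finset.mem_coe, Finset.mem_filter, Finset.mem_product, Finset.mem_range] at hp
    simp only [cntFin, Finset.mem_coe, Finset.mem_filter, Finset.mem_range]
    exact ⟨by omega, hp.2.1⟩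
  · intro p hp q hq hpq
    simp only [RFin, Finset.coe_filter, Set.mem_setOf_eq] at hp hq
    have hpq' : p.1 = q.1 := hpq
    have hp2 := hp.2.2.2
    have hq2 := hq.2.2.2
    have : p.2 = q.2 := by omega
    exact Prod.ext hpq this

lemma Dn_add_le (A : Set ℕ) {K j N : ℕ} (h : K + j ≤ N) :
    Dn A (K + j) ≤ Dn A K + j * cnt A N := by
  induction j with
  | zero => simp
  | succ j ih =>
    have h' : K + j ≤ N := by omega
    have : Dn A (K + (j+1)) = Dn A (K + j) + Rf A (K + j + 1) := by
      show ∑ m ∈ Finset.range (K + (j+1) + 1), Rf A m = _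
      rw [show K + (j+1) + 1 = (K + j + 1) + 1 by ring, Finset.sum_range_succ]
      rfl
    rw [this]
    have h2 : Rf A (K + j + 1) ≤ cnt A N := Rf_le_cnt A (by omega)
    have := ih h'
    nlinarith

lemma Dn_mono (A : Set ℕ) {m n : ℕ} (h : m ≤ n) : Dn A m ≤ Dn A n := by
  apply Finset.sum_le_sum_of_subset
  exact Finset.range_subset_range.2 (by omega)

lemma cnt_sq_le_Dn (A : Set ℕ) (K : ℕ) : (cnt A (K/2))^2 ≤ Dn A K := by
  rw [cnt_eq]
  have hsub : ∀ m ∈ Finset.range (K+1), RFin A m ⊆ Finset.range (K+1) ×ˢ Finset.range (K+1) := by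
    intro m hm
    simp only [Finset.mem_range] at hm
    intro p hp
    simp only [RFin, Finset.mem_filter, Finset.mem_product, Finset.mem_range] at hp
    simp only [Finset.mem_product, Finset.mem_range]
    omega
  -- Dn A K = card of the union
  have hdisj : ((Finset.range (K+1) : Finset ℕ) : Set ℕ).PairwiseDisjoint (RFin A) := by
    intro m _ n _ hmn
    simp only [Finset.disjoint_left]
    intro p hp hq
    simp only [RFin, Finset.mem_filter] at hp hq
    exact hmn (by omega)
  have hD : Dn A K = ((Finset.range (K+1)).biUnion (RFin A)).card := by
    rw [Finset.card_biUnion (fun m hm n hn hmn => hdisj hm hn hmn)]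
    unfold Dn
    exact Finset.sum_congr rfl (fun m _ => Rf_eq A m)
  rw [hD]
  have hsub2 : cntFin A (K/2) ×ˢ cntFin A (K/2) ⊆ (Finset.range (K+1)).biUnion (RFin A) := by
    intro p hp
    simp only [Finset.mem_product, cntFin, Finset.mem_filter, Finset.mem_range] at hp
    rw [Finset.mem_biUnion]
    refine ⟨p.1 + p.2, ?_, ?_⟩
    · simp only [Finset.mem_range]; omega
    · simp only [RFin, Finset.mem_filter, Finset.mem_product, Finset.mem_range]
      exact ⟨⟨by omega, by omega⟩, hp.1.2, hp.2.2, trivial⟩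
  calc (cntFin A (K/2)).card ^ 2 = (cntFin A (K/2) ×ˢ cntFin A (K/2)).card := by
        rw [Finset.card_product]; ring
  _ ≤ _ := Finset.card_le_card hsub2

lemma Bf_le (A : Set ℕ) (lam : ℕ → ℤ) (d n : ℕ) : Bf A lam d n ≤ (d+1) * cnt A n := by
  rw [Bf_eq, cnt_eq]
  have hsub : ((Finset.range (n+1)).filter
      (fun m : ℕ => ∑ i ∈ Finset.range (d+1), lam i * chi A ((m : ℤ) - i) ≠ 0))
      ⊆ (Finset.range (d+1)).biUnion (fun i => (cntFin A n).image (· + i)) := by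
    intro m hm
    simp only [Finset.mem_filter, Finset.mem_range] at hm
    obtain ⟨hmn, hne⟩ := hm
    obtain ⟨i, hi, hne2⟩ := Finset.exists_ne_zero_of_sum_ne_zero hne
    have hchi : chi A ((m : ℤ) - i) ≠ 0 := by
      intro h0; rw [h0, mul_zero] at hne2; exact hne2 rfl
    rw [chi] at hchi
    have hc : (0 : ℤ) ≤ (m : ℤ) - i ∧ ((m : ℤ) - i).toNat ∈ A := by
      by_contra hcon; exact hchi (if_neg hcon)
    obtain ⟨hge, hmem⟩ := hc
    have him : (i : ℕ) ≤ m := by exact_mod_cast sub_nonneg.1 hge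
    have htn : ((m : ℤ) - i).toNat = m - i := by omega
    rw [htn] at hmem
    rw [Finset.mem_biUnion]
    refine ⟨i, hi, ?_⟩
    rw [Finset.mem_image]
    refine ⟨m - i, ?_, by omega⟩
    simp only [cntFin, Finset.mem_filter, Finset.mem_range]
    exact ⟨by omega, hmem⟩
  calc _ ≤ ((Finset.range (d+1)).biUnion (fun i => (cntFin A n).image (· + i))).card :=
        Finset.card_le_card hsub
  _ ≤ ∑ i ∈ Finset.range (d+1), ((cntFin A n).image (· + i)).card := Finset.card_biUnion_le
  _ ≤ ∑ i ∈ Finset.range (d+1), (cntFin A n).card :=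
        Finset.sum_le_sum (fun i _ => Finset.card_image_le)
  _ = (d+1) * (cntFin A n).card := by rw [Finset.sum_const, Finset.card_range, smul_eq_mul]

lemma sum_Rz (A : Set ℕ) {i N : ℕ} (h : i ≤ N) :
    ∑ n ∈ Finset.range (N+1), Rz A ((n : ℤ) - i) = Dn A (N - i) := by
  rw [Finset.range_eq_Ico, ← Finset.sum_Ico_consecutive _ (Nat.zero_le i) (by omega : i ≤ N+1)]
  have h1 : ∑ n ∈ Finset.Ico 0 i, Rz A ((n : ℤ) - i) = 0 := by
    apply Finset.sum_eq_zero
    intro n hn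
    simp only [Finset.mem_Ico] at hn
    rw [Rz, if_neg (by omega)]
  have h2 : ∑ n ∈ Finset.Ico i (N+1), Rz A ((n : ℤ) - i) = Dn A (N - i) := by
    rw [Finset.sum_Ico_eq_sum_range]
    have : N + 1 - i = (N - i) + 1 := by omega
    rw [this]
    apply Finset.sum_congr rfl
    intro m _
    rw [Rz, if_pos (by push_cast; omega)]
    congr 1
    push_cast
    omega
  rw [h1, h2, zero_add]

set_option maxHeartbeats 2000000 in
lemma key (A : Set ℕ) (lam : ℕ → ℤ) (d : ℕ)
    (hsum : 0 < ∑ i ∈ Finset.range (d + 1), lam i)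
    (M ε : ℝ) (hM : 0 ≤ M) (hε : 0 < ε)
    (hev : ∀ᶠ n : ℕ in atTop,
      |∑ i ∈ Finset.range (d + 1), (lam i : ℝ) * Rz A ((n : ℤ) - i)| ≤ M + ε) :
    ∀ᶠ n : ℕ in atTop,
      ((∑ i ∈ Finset.range (d + 1), lam i : ℤ) : ℝ) / (2 * (d + 1) ^ 2) *
          ((Bf A lam d n : ℝ) / Real.sqrt n) ^ 2 ≤ M + 2 * ε := by
  obtain ⟨n₀, hn₀⟩ := eventually_atTop.1 hev
  set s : ℕ → ℝ := fun n => ∑ i ∈ Finset.range (d + 1), (lam i : ℝ) * Rz A ((n : ℤ) - i)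
    with hs
  set Sr : ℝ := ((∑ i ∈ Finset.range (d + 1), lam i : ℤ) : ℝ) with hSr
  have hSpos : (0:ℝ) < Sr := by rw [hSr]; exact_mod_cast hsum
  have hSr' : Sr = ∑ i ∈ Finset.range (d + 1), ((lam i : ℝ)) := by
    rw [hSr]; push_cast; ring
  set σ : ℝ := ∑ i ∈ Finset.range (d + 1), |(lam i : ℝ)| with hσ
  have hσ0 : 0 ≤ σ := Finset.sum_nonneg fun i _ => abs_nonneg _
  set C₀ : ℝ := ∑ n ∈ Finset.range n₀, |s n| with hC₀
  have hC₀0 : 0 ≤ C₀ := Finset.sum_nonneg fun n _ => abs_nonneg _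
  set T : ℕ → ℝ := fun N => ∑ n ∈ Finset.range (N+1), s n with hT
  have hMε : 0 ≤ M + ε := by linarith
  clear_value s Sr σ C₀ T
  -- Step 1: upper bound on T
  have hTub : ∀ N, n₀ ≤ N → T N ≤ C₀ + (M + ε) * (N + 1) := by
    intro N hN
    have h1 : T N ≤ ∑ n ∈ Finset.range (N+1), |s n| := by
      rw [hT]
      exact Finset.sum_le_sum fun n _ => le_abs_self _
    have hsplit : ∑ n ∈ Finset.range (N+1), |s n|
        = C₀ + ∑ n ∈ Finset.Ico n₀ (N+1), |s n| := by
      rw [hC₀, Finset.range_eq_Ico, Finset.range_eq_Ico]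
      exact (Finset.sum_Ico_consecutive (fun n => |s n|) (Nat.zero_le n₀)
        (by omega : n₀ ≤ N+1)).symm
    have h2 : ∑ n ∈ Finset.Ico n₀ (N+1), |s n| ≤ ((N + 1 - n₀ : ℕ) : ℝ) * (M + ε) := by
      have := Finset.sum_le_card_nsmul (Finset.Ico n₀ (N+1)) (fun n => |s n|) (M + ε)
        (fun n hn => by simp only [hs]; exact hn₀ n (Finset.mem_Ico.1 hn).1)
      rwa [Nat.card_Ico, nsmul_eq_mul] at this
    have h3 : ((N + 1 - n₀ : ℕ) : ℝ) ≤ (N : ℝ) + 1 := by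
      have : (N + 1 - n₀ : ℕ) ≤ N + 1 := by omega
      exact_mod_cast le_trans (Nat.cast_le.2 this) (by push_cast; linarith)
    nlinarith [h1, hsplit, h2, h3, hMε]
  -- Step 2: swap
  have hTswap : ∀ N, d ≤ N →
      T N = ∑ i ∈ Finset.range (d+1), (lam i : ℝ) * (Dn A (N - i) : ℝ) := by
    intro N hN
    simp only [hT, hs]
    rw [Finset.sum_comm]
    apply Finset.sum_congr rfl
    intro i hi
    rw [← Finset.mul_sum]
    congr 1
    have hiN : i ≤ N := by
      simp only [Finset.mem_range] at hi; omega
    rw [← Nat.cast_sum, sum_Rz A hiN]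
  -- Step 3: lower bound on T
  have hTlb : ∀ N, d ≤ N →
      Sr * (Dn A (N - d) : ℝ) - σ * ((d * cnt A N : ℕ) : ℝ) ≤ T N := by
    intro N hN
    rw [hTswap N hN]
    have key1 : ∀ i ∈ Finset.range (d+1),
        (lam i : ℝ) * (Dn A (N-d) : ℝ) - |(lam i:ℝ)| * ((d * cnt A N : ℕ) : ℝ)
          ≤ (lam i : ℝ) * (Dn A (N-i) : ℝ) := by
      intro i hi
      simp only [Finset.mem_range] at hi
      have hx : Dn A (N-d) ≤ Dn A (N-i) := Dn_mono A (by omega)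
      have hy : Dn A (N-i) ≤ Dn A (N-d) + d * cnt A N := by
        have h1 : N - i = (N - d) + (d - i) := by omega
        have h2 := Dn_add_le A (K := N-d) (j := d-i) (N := N) (by omega)
        rw [← h1] at h2
        have h3 : (d - i) * cnt A N ≤ d * cnt A N := Nat.mul_le_mul_right _ (by omega)
        omega
      have hxr : (Dn A (N-d) : ℝ) ≤ (Dn A (N-i) : ℝ) := Nat.cast_le.2 hx
      have hyr : (Dn A (N-i) : ℝ) ≤ (Dn A (N-d) : ℝ) + ((d * cnt A N : ℕ):ℝ) := by
        exact_mod_cast Nat.cast_le.2 hy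
      rcases abs_cases (lam i : ℝ) with ⟨ha, hl⟩ | ⟨ha, hl⟩ <;> nlinarith
    calc Sr * (Dn A (N - d) : ℝ) - σ * ((d * cnt A N : ℕ) : ℝ)
        = ∑ i ∈ Finset.range (d+1),
          ((lam i : ℝ) * (Dn A (N-d) : ℝ) - |(lam i:ℝ)| * ((d * cnt A N : ℕ) : ℝ)) := by
          rw [Finset.sum_sub_distrib, ← Finset.sum_mul, ← Finset.sum_mul, ← hSr', ← hσ]
    _ ≤ _ := Finset.sum_le_sum key1
  -- master inequality
  have master : ∀ n : ℕ, n₀ + d + 1 ≤ n →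
      Sr * ((cnt A n : ℝ))^2
        ≤ C₀ + (M+ε) * (2*(n:ℝ) + d + 1) + σ * d * (cnt A (2*n+d) : ℝ) := by
    intro n hn
    set N := 2*n + d with hN
    have hdN : d ≤ N := by omega
    have hn₀N : n₀ ≤ N := by omega
    have h1 := hTub N hn₀N
    have h2 := hTlb N hdN
    have h3 : ((cnt A n : ℝ))^2 ≤ (Dn A (N - d) : ℝ) := by
      have h4 := cnt_sq_le_Dn A (2*n)
      have h5 : (2*n)/2 = n := by omega
      rw [h5] at h4
      have h6 : N - d = 2*n := by omega
      rw [h6]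
      exact_mod_cast h4
    have h7 : ((d * cnt A N : ℕ) : ℝ) = (d:ℝ) * (cnt A (2*n+d) : ℝ) := by push_cast; rfl
    have h8 : ((N:ℕ):ℝ) = 2*(n:ℝ) + d := by rw [hN]; push_cast; ring
    nlinarith [mul_le_mul_of_nonneg_left h3 (le_of_lt hSpos)]
  -- quantitative cnt bound
  set c₁ : ℝ := 2*(M+ε) + 2*σ*d with hc₁
  set c₂ : ℝ := C₀ + (M+ε)*(d+1) + σ*d*(d+1) with hc₂
  have hc₁0 : 0 ≤ c₁ := by positivity
  have hc₂0 : 0 ≤ c₂ := by positivity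
  set n₁ := n₀ + d + 1 with hn₁
  clear_value c₁ c₂
  have hcnt2 : ∀ m : ℕ, n₁ ≤ m → Sr * ((cnt A m : ℝ))^2 ≤ c₁ * m + c₂ := by
    intro m hm
    have h1 := master m hm
    have h2 : (cnt A (2*m+d) : ℝ) ≤ 2*(m:ℝ) + d + 1 := by
      have := cnt_le A (2*m+d)
      exact_mod_cast le_trans (Nat.cast_le.2 this) (by push_cast; linarith)
    nlinarith [mul_le_mul_of_nonneg_left h2
      (mul_nonneg hσ0 (Nat.cast_nonneg d : (0:ℝ) ≤ (d:ℝ)))]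
  -- choose threshold
  set B₁ : ℝ := (C₀ + (M+ε)*((d:ℝ)+1)) / ε with hB₁
  set B₂ : ℝ := (σ*d)^2 * (3*c₁ + c₂) / (Sr * ε^2) with hB₂
  clear_value B₁ B₂
  obtain ⟨n₂, hn₂⟩ := exists_nat_ge (max B₁ B₂)
  rw [eventually_atTop]
  refine ⟨max n₂ (n₁ + d + 1), fun n hn => ?_⟩
  have hnn₂ : n₂ ≤ n := le_trans (le_max_left _ _) hn
  have hnn₁ : n₁ + d + 1 ≤ n := le_trans (le_max_right _ _) hn
  have hxB : max B₁ B₂ ≤ (n:ℝ) := le_trans hn₂ (Nat.cast_le.2 hnn₂)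
  have hxB₁ : B₁ ≤ (n:ℝ) := le_trans (le_max_left _ _) hxB
  have hxB₂ : B₂ ≤ (n:ℝ) := le_trans (le_max_right _ _) hxB
  have hnpos : (0:ℝ) < n := by
    exact_mod_cast (by omega : 0 < n)
  have hdn : (d:ℝ) ≤ (n:ℝ) := Nat.cast_le.2 (by omega)
  have hn1 : (1:ℝ) ≤ (n:ℝ) := by exact_mod_cast (by omega : 1 ≤ n)
  -- (1) constants bound
  have hconst : C₀ + (M+ε)*((d:ℝ)+1) ≤ ε * n := by
    rw [hB₁, div_le_iff₀ hε] at hxB₁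
    linarith
  -- (2) cnt(2n+d) bound
  have hcntb : σ * d * (cnt A (2*n+d) : ℝ) ≤ ε * n := by
    set y : ℝ := (cnt A (2*n+d) : ℝ) with hy
    have hy0 : 0 ≤ y := by rw [hy]; exact Nat.cast_nonneg _
    clear_value y
    have hm : n₁ ≤ 2*n+d := by omega
    have hsq := hcnt2 (2*n+d) hm
    have hcast : ((2*n+d : ℕ):ℝ) = 2*(n:ℝ)+d := by push_cast; ring
    rw [hcast, ← hy] at hsq
    -- Sr * y^2 ≤ c₁*(2n+d) + c₂ ≤ (3c₁+c₂)*n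
    have hlin : c₁ * (2*(n:ℝ)+d) + c₂ ≤ (3*c₁ + c₂) * n := by
      have e1 : c₁ * (d:ℝ) ≤ c₁ * n := mul_le_mul_of_nonneg_left hdn hc₁0
      have e2 : c₂ * 1 ≤ c₂ * n := mul_le_mul_of_nonneg_left hn1 hc₂0
      rw [mul_one] at e2
      linarith
    -- (σ d y)^2 * Sr ≤ (σd)^2 (3c₁+c₂) n ≤ Sr ε² n²
    have hB₂' : (σ*d)^2 * (3*c₁ + c₂) ≤ (n:ℝ) * (Sr * ε^2) := by
      rw [hB₂, div_le_iff₀ (by positivity)] at hxB₂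
      linarith
    have hkey : (σ*d*y)^2 * Sr ≤ (ε*n)^2 * Sr := by
      calc (σ*d*y)^2 * Sr = (σ*d)^2 * (Sr * y^2) := by ring
      _ ≤ (σ*d)^2 * ((3*c₁ + c₂) * n) := by
          apply mul_le_mul_of_nonneg_left _ (by positivity)
          exact le_trans hsq hlin
      _ = ((σ*d)^2 * (3*c₁ + c₂)) * n := by ring
      _ ≤ ((n:ℝ) * (Sr * ε^2)) * n := mul_le_mul_of_nonneg_right hB₂' (le_of_lt hnpos)
      _ = (ε*n)^2 * Sr := by ring
    have hkey2 : (σ*d*y)^2 ≤ (ε*n)^2 := le_of_mul_le_mul_right hkey hSpos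
    have hnn1 : 0 ≤ σ*d*y := mul_nonneg (mul_nonneg hσ0 (Nat.cast_nonneg d)) hy0
    have hnn2 : 0 ≤ ε*(n:ℝ) := mul_nonneg (le_of_lt hε) (le_of_lt hnpos)
    calc σ*d*y = Real.sqrt ((σ*d*y)^2) := (Real.sqrt_sq hnn1).symm
    _ ≤ Real.sqrt ((ε*(n:ℝ))^2) := Real.sqrt_le_sqrt hkey2
    _ = ε*(n:ℝ) := Real.sqrt_sq hnn2
  -- combine: Sr * cnt(n)^2 ≤ (M+2ε) * 2n
  have hfin : Sr * ((cnt A n : ℝ))^2 ≤ (M + 2*ε) * (2*n) := by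
    have h1 := master n (by omega)
    linarith [hconst, hcntb]
  -- final goal
  have hBle : (Bf A lam d n : ℝ) ≤ ((d:ℝ)+1) * (cnt A n : ℝ) := by
    have h := (Nat.cast_le (α := ℝ)).2 (Bf_le A lam d n)
    push_cast at h
    exact h
  have hB0 : (0:ℝ) ≤ (Bf A lam d n : ℝ) := Nat.cast_nonneg _
  have hsq : ((Bf A lam d n : ℝ) / Real.sqrt n) ^ 2 = (Bf A lam d n : ℝ)^2 / n := by
    rw [div_pow, Real.sq_sqrt (Nat.cast_nonneg n)]
  rw [hsq]
  have hBsq : (Bf A lam d n : ℝ)^2 ≤ ((d:ℝ)+1)^2 * ((cnt A n : ℝ))^2 := by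
    calc (Bf A lam d n : ℝ)^2 ≤ (((d:ℝ)+1) * (cnt A n : ℝ))^2 := pow_le_pow_left₀ hB0 hBle 2
    _ = ((d:ℝ)+1)^2 * ((cnt A n : ℝ))^2 := by rw [mul_pow]
  have hne1 : ((d:ℝ)+1) ≠ 0 := by positivity
  have hne2 : (n:ℝ) ≠ 0 := ne_of_gt hnpos
  have e1 : Sr / (2*((d:ℝ)+1)^2) * ((Bf A lam d n : ℝ)^2 / n)
      ≤ Sr / (2*((d:ℝ)+1)^2) * ((((d:ℝ)+1)^2 * ((cnt A n : ℝ))^2) / n) := by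
    exact mul_le_mul_of_nonneg_left ((div_le_div_iff_of_pos_right hnpos).2 hBsq)
      (div_nonneg (le_of_lt hSpos) (by positivity))
  have e2 : Sr / (2*((d:ℝ)+1)^2) * ((((d:ℝ)+1)^2 * ((cnt A n : ℝ))^2) / n)
      = Sr * ((cnt A n : ℝ))^2 / (2*n) := by
    rw [div_mul_div_comm, div_eq_div_iff (by positivity) (by positivity)]
    ring
  have e3 : Sr * ((cnt A n : ℝ))^2 / (2*n) ≤ M + 2*ε := by
    rw [div_le_iff₀ (by positivity)]
    calc Sr * ((cnt A n : ℝ))^2 ≤ (M + 2*ε) * (2*n) := hfin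
    _ = M + 2*ε + (M + 2*ε) * (2*n) - (M + 2*ε) - (M + 2*ε) * (2*n) + (M + 2*ε) * (2*n) := by ring
    _ = (M + 2*ε) * (2*n) := by ring
  calc Sr / (2*((d:ℝ)+1)^2) * ((Bf A lam d n : ℝ)^2 / n)
      ≤ Sr / (2*((d:ℝ)+1)^2) * ((((d:ℝ)+1)^2 * ((cnt A n : ℝ))^2) / n) := e1
  _ = Sr * ((cnt A n : ℝ))^2 / (2*n) := e2
  _ ≤ M + 2*ε := e3

theorem stmt4 (d : ℕ) (lam : ℕ → ℤ)
    (hsum : 0 < ∑ i ∈ Finset.range (d + 1), lam i)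
    (A : Set ℕ) (hA : A.Infinite) :
    limsup (fun n : ℕ =>
        ((|∑ i ∈ Finset.range (d + 1), (lam i : ℝ) * Rz A ((n : ℤ) - i)| : ℝ) : EReal)) atTop
      ≥ limsup (fun n : ℕ =>
        ((((∑ i ∈ Finset.range (d + 1), lam i : ℤ) : ℝ) / (2 * (d + 1) ^ 2) *
          ((Bf A lam d n : ℝ) / Real.sqrt n) ^ 2 : ℝ) : EReal)) atTop := by
  rw [ge_iff_le]
  set u : ℕ → EReal := fun n =>
    ((|∑ i ∈ Finset.range (d + 1), (lam i : ℝ) * Rz A ((n : ℤ) - i)| : ℝ) : EReal) with hu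
  set v : ℕ → EReal := fun n =>
    ((((∑ i ∈ Finset.range (d + 1), lam i : ℤ) : ℝ) / (2 * (d + 1) ^ 2) *
      ((Bf A lam d n : ℝ) / Real.sqrt n) ^ 2 : ℝ) : EReal) with hv
  rcases eq_top_or_lt_top (limsup u atTop) with htop | hlt
  · rw [htop]; exact le_top
  have h0 : (0 : EReal) ≤ limsup u atTop := by
    apply le_limsup_of_frequently_le'
    apply Frequently.of_forall
    intro n
    rw [hu]
    exact EReal.coe_nonneg.2 (abs_nonneg _)
  set M := (limsup u atTop).toReal with hMdef
  have hbot : limsup u atTop ≠ ⊥ := by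
    intro h; rw [h] at h0; exact absurd h0 (by simp)
  have hMeq : ((M : ℝ) : EReal) = limsup u atTop := EReal.coe_toReal (ne_of_lt hlt) hbot
  have hM0 : 0 ≤ M := EReal.coe_nonneg.1 (hMeq ▸ h0)
  have hmain : ∀ ε : ℝ, 0 < ε → limsup v atTop ≤ ((M + 2 * ε : ℝ) : EReal) := by
    intro ε hε
    have hev : ∀ᶠ n in atTop, u n < ((M + ε : ℝ) : EReal) := by
      refine eventually_lt_of_limsup_lt ?_ (by isBoundedDefault)
      rw [← hMeq]
      exact_mod_cast (by linarith : M < M + ε)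
    have hev' : ∀ᶠ n : ℕ in atTop,
        |∑ i ∈ Finset.range (d + 1), (lam i : ℝ) * Rz A ((n : ℤ) - i)| ≤ M + ε := by
      refine hev.mono fun n h => ?_
      rw [hu] at h
      exact le_of_lt (EReal.coe_lt_coe_iff.1 h)
    have hk := key A lam d hsum M ε hM0 hε hev'
    refine limsup_le_of_le (by isBoundedDefault) (hk.mono fun n h => ?_)
    rw [hv]
    exact EReal.coe_le_coe_iff.2 h
  by_contra hcon
  push_neg at hcon
  rw [← hMeq] at hcon
  obtain ⟨c, hc1, hc2⟩ := EReal.exists_between_coe_real hcon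
  have hcM : M < c := EReal.coe_lt_coe_iff.1 hc1
  have := hmain ((c - M) / 2) (by linarith)
  have heq : M + 2 * ((c - M) / 2) = c := by ring
  rw [heq] at this
  exact absurd (lt_of_le_of_lt this hc2) (lt_irrefl _)
end

section
/- Let λ_0,...,λ_d be integers, not all zero, with Σ_{i=0}^d λ_i = 0. Then for every infinite set A ⊆ ℕ, limsup_{n→∞} |Σ_{i=0}^d λ_i·R_A(n-i)| ≥ limsup_{n→∞} (√2/(e^2·Σ_{i=0}^d |λ_i|))·B(A,λ,n)/√n. -/
open Filter Finset
open scoped Classical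

namespace EF7

noncomputable def chiR (A : Set ℕ) (k : ℤ) : ℝ := if 0 ≤ k ∧ k.toNat ∈ A then 1 else 0

lemma chi_cast (A : Set ℕ) (k : ℤ) : ((chi A k : ℤ) : ℝ) = chiR A k := by
  unfold chi chiR; split <;> simp

lemma chiR_nonneg (A : Set ℕ) (k : ℤ) : 0 ≤ chiR A k := by unfold chiR; split <;> norm_num

lemma chiR_le_one (A : Set ℕ) (k : ℤ) : chiR A k ≤ 1 := by unfold chiR; split <;> norm_num

lemma chiR_neg (A : Set ℕ) {k : ℤ} (h : k < 0) : chiR A k = 0 := by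
  unfold chiR; rw [if_neg]; push_neg; intro h'; omega

noncomputable def Sfn (A : Set ℕ) (lam : ℕ → ℤ) (d n : ℕ) : ℝ :=
  ∑ i ∈ range (d+1), (lam i : ℝ) * (Rz A ((n:ℤ) - i) : ℝ)

noncomputable def gz (A : Set ℕ) (ρ : ℝ) (k : ℤ) : ℝ := chiR A k * ρ ^ k.toNat

noncomputable def Tz (A : Set ℕ) (lam : ℕ → ℤ) (d : ℕ) (ρ : ℝ) (m : ℤ) : ℝ :=
  ∑ i ∈ range (d+1), (lam i : ℝ) * ρ ^ i * gz A ρ (m - (i:ℤ))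

noncomputable def ttZ (A : Set ℕ) (lam : ℕ → ℤ) (d : ℕ) (m : ℤ) : ℤ :=
  ∑ i ∈ range (d+1), lam i * chi A (m - i)

variable (A : Set ℕ) (lam : ℕ → ℤ) (d : ℕ) {ρ : ℝ}

lemma gz_nonneg (hρ : 0 ≤ ρ) (k : ℤ) : 0 ≤ gz A ρ k :=
  mul_nonneg (chiR_nonneg A k) (pow_nonneg hρ _)

lemma gz_neg {k : ℤ} (h : k < 0) : gz A ρ k = 0 := by
  unfold gz; rw [chiR_neg A h, zero_mul]

lemma gz_le (hρ : 0 ≤ ρ) (k : ℤ) : gz A ρ k ≤ ρ ^ k.toNat := by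
  unfold gz
  calc chiR A k * ρ ^ k.toNat ≤ 1 * ρ ^ k.toNat := by
        exact mul_le_mul_of_nonneg_right (chiR_le_one A k) (pow_nonneg hρ _)
    _ = ρ ^ k.toNat := one_mul _

lemma gz_le_one (hρ0 : 0 ≤ ρ) (hρ1 : ρ ≤ 1) (k : ℤ) : gz A ρ k ≤ 1 :=
  le_trans (gz_le A hρ0 k) (pow_le_one₀ hρ0 hρ1)

lemma Tz_neg {m : ℤ} (h : m < 0) : Tz A lam d ρ m = 0 := by
  unfold Tz
  apply Finset.sum_eq_zero
  intro i _
  rw [gz_neg A (by omega : m - (i:ℤ) < 0), mul_zero]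

lemma Tz_natcast (m : ℕ) :
    Tz A lam d ρ (m : ℤ) = ρ ^ m * ((ttZ A lam d m : ℤ) : ℝ) := by
  unfold Tz ttZ
  push_cast
  rw [Finset.mul_sum]
  apply Finset.sum_congr rfl
  intro i _
  rw [chi_cast]
  by_cases h : (i : ℤ) ≤ (m : ℤ)
  · have h2 : (0:ℤ) ≤ (m:ℤ) - i := by omega
    have h3 : ((m:ℤ) - i).toNat = m - i := by omega
    have h4 : i ≤ m := by exact_mod_cast h
    unfold gz
    rw [h3]
    have : ρ ^ i * ρ ^ (m - i) = ρ ^ m := by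
      rw [← pow_add]; congr 1; omega
    rw [← this]
    ring
  · rw [gz_neg A (by omega), chiR_neg A (by omega)]
    ring
section part2
variable (A : Set ℕ) (lam : ℕ → ℤ) (d : ℕ) {ρ : ℝ}

lemma ttZ_abs_le (m : ℤ) : |((ttZ A lam d m : ℤ) : ℝ)| ≤ ∑ i ∈ range (d+1), |(lam i : ℝ)| := by
  unfold ttZ
  push_cast
  refine le_trans (Finset.abs_sum_le_sum_abs _ _) ?_
  apply Finset.sum_le_sum
  intro i _
  rw [abs_mul, chi_cast]
  calc |(lam i : ℝ)| * |chiR A ((m:ℤ) - i)| ≤ |(lam i : ℝ)| * 1 := by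
        apply mul_le_mul_of_nonneg_left _ (abs_nonneg _)
        rw [abs_of_nonneg (chiR_nonneg _ _)]; exact chiR_le_one _ _
    _ = |(lam i : ℝ)| := mul_one _

lemma Tz_abs_le_nat (hρ0 : 0 ≤ ρ) (m : ℕ) :
    |Tz A lam d ρ (m : ℤ)| ≤ (∑ i ∈ range (d+1), |(lam i : ℝ)|) * ρ ^ m := by
  rw [Tz_natcast, abs_mul, abs_of_nonneg (pow_nonneg hρ0 m), mul_comm]
  exact mul_le_mul_of_nonneg_right (ttZ_abs_le A lam d m) (pow_nonneg hρ0 m)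

lemma Tz_abs_le' (hρ0 : 0 ≤ ρ) (hρ1 : ρ ≤ 1) (m : ℤ) :
    |Tz A lam d ρ m| ≤ (∑ i ∈ range (d+1), |(lam i : ℝ)|) * ρ ^ m.toNat := by
  rcases lt_or_ge m 0 with h | h
  · rw [Tz_neg A lam d h, abs_zero]
    exact mul_nonneg (Finset.sum_nonneg fun i _ => abs_nonneg _) (pow_nonneg hρ0 _)
  · obtain ⟨n, rfl⟩ := Int.eq_ofNat_of_zero_le h
    simpa using Tz_abs_le_nat A lam d hρ0 n

/-- Rf as a finite count. -/
lemma Rf_eq_card (A : Set ℕ) (k : ℕ) :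
    Rf A k = ((range (k+1)).filter (fun a => a ∈ A ∧ k - a ∈ A)).card := by
  unfold Rf
  have e : {p : ℕ × ℕ | p.1 ∈ A ∧ p.2 ∈ A ∧ p.1 + p.2 = k}
      = ↑(((range (k+1)).filter (fun a => a ∈ A ∧ k - a ∈ A)).image (fun a => (a, k - a))) := by
    ext ⟨p₁, p₂⟩
    simp only [Set.mem_setOf_eq, Finset.coe_image, Set.mem_image, Finset.mem_coe,
      Finset.mem_filter, Finset.mem_range]
    constructor
    · rintro ⟨h1, h2, h3⟩
      exact ⟨p₁, ⟨by omega, h1, by rw [show k - p₁ = p₂ by omega]; exact h2⟩, by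
        simp [show k - p₁ = p₂ by omega]⟩
    · rintro ⟨a, ⟨ha1, ha2, ha3⟩, h⟩
      obtain ⟨rfl, rfl⟩ := Prod.mk.injEq .. ▸ h
      exact ⟨ha2, ha3, by omega⟩
  rw [e, Nat.card_coe_set_eq, Set.ncard_coe_finset, Finset.card_image_of_injOn]
  intro a ha b hb hab
  exact (Prod.mk.injEq .. ▸ hab).1

lemma chiR_natcast (A : Set ℕ) (a : ℕ) : chiR A (a : ℤ) = if a ∈ A then 1 else 0 := by
  unfold chiR; simp

lemma chiR_sub (A : Set ℕ) (m a : ℕ) (h : a ≤ m) :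
    chiR A ((m:ℤ) - a) = if m - a ∈ A then 1 else 0 := by
  unfold chiR
  have h0 : (0:ℤ) ≤ (m:ℤ) - a := by omega
  have h1 : ((m:ℤ) - a).toNat = m - a := by omega
  rw [h1]
  simp [h0, h]

/-- Rz in terms of chiR. -/
lemma Rz_eq_sum (A : Set ℕ) (k : ℤ) (n : ℕ) (hk : k ≤ n) :
    ((Rz A k : ℕ) : ℝ) = ∑ a ∈ range (n+1), chiR A (k - a) * chiR A a := by
  rcases lt_or_ge k 0 with h | h
  · rw [show Rz A k = 0 by unfold Rz; rw [if_neg (by omega)]]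
    rw [Finset.sum_eq_zero]
    · simp
    intro a _
    rw [chiR_neg A (by omega), zero_mul]
  · obtain ⟨m, rfl⟩ := Int.eq_ofNat_of_zero_le h
    rw [show Rz A m = Rf A m by unfold Rz; rw [if_pos h]; simp]
    rw [Rf_eq_card, Finset.card_filter]
    have hmn : m ≤ n := by exact_mod_cast hk
    push_cast
    rw [← Finset.sum_subset (Finset.range_subset_range.2 (by omega : m+1 ≤ n+1))]
    · apply Finset.sum_congr rfl
      intro a ha
      rw [Finset.mem_range] at ha
      have ha' : a ≤ m := by omega
      rw [chiR_sub A m a ha', chiR_natcast]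
      by_cases h1 : a ∈ A <;> by_cases h2 : m - a ∈ A <;> simp [h1, h2]
    · intro a ha hna
      rw [Finset.mem_range] at ha hna
      rw [chiR_neg A (by omega), zero_mul]
end part2
section part3
variable (A : Set ℕ) (lam : ℕ → ℤ) (d : ℕ) {ρ : ℝ}

lemma Bf_eq_card (N : ℕ) :
    Bf A lam d N = ((range (N+1)).filter (fun m : ℕ => ttZ A lam d (m:ℤ) ≠ 0)).card := by
  unfold Bf
  have e : {m : ℕ | m ≤ N ∧ ∑ i ∈ Finset.range (d+1), lam i * chi A ((m : ℤ) - i) ≠ 0}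
      = ↑((range (N+1)).filter (fun m : ℕ => ttZ A lam d (m:ℤ) ≠ 0)) := by
    ext m
    simp only [Set.mem_setOf_eq, Finset.coe_filter, Finset.mem_range]
    unfold ttZ
    constructor
    · rintro ⟨h1, h2⟩; exact ⟨by omega, h2⟩
    · rintro ⟨h1, h2⟩; exact ⟨by omega, h2⟩
  rw [e, Nat.card_coe_set_eq, Set.ncard_coe_finset]

lemma Bf_le_sum (hρ0 : 0 < ρ) (hρ1 : ρ ≤ 1) (N : ℕ) :
    (Bf A lam d N : ℝ) * ρ ^ (2*N) ≤ ∑ m ∈ range (N+1), (Tz A lam d ρ (m:ℤ))^2 := by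
  rw [Bf_eq_card]
  have h1 : ∀ m ∈ (range (N+1)).filter (fun m : ℕ => ttZ A lam d (m:ℤ) ≠ 0),
      ρ ^ (2*N) ≤ (Tz A lam d ρ (m:ℤ))^2 := by
    intro m hm
    rw [Finset.mem_filter, Finset.mem_range] at hm
    rw [Tz_natcast, mul_pow, ← pow_mul]
    have h2 : (1:ℝ) ≤ ((ttZ A lam d (m:ℤ) : ℤ):ℝ)^2 := by
      have : (1:ℤ) ≤ (ttZ A lam d (m:ℤ))^2 := by
        rcases lt_trichotomy (ttZ A lam d (m:ℤ)) 0 with h | h | h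
        · nlinarith
        · exact absurd h hm.2
        · nlinarith
      exact_mod_cast this
    calc ρ ^ (2*N) ≤ ρ ^ (m*2) := by
          apply pow_le_pow_of_le_one (le_of_lt hρ0) hρ1; omega
      _ = ρ ^ (m*2) * 1 := (mul_one _).symm
      _ ≤ ρ ^ (m*2) * ((ttZ A lam d (m:ℤ) : ℤ):ℝ)^2 := by
          exact mul_le_mul_of_nonneg_left h2 (pow_nonneg (le_of_lt hρ0) _)
  calc (((range (N+1)).filter (fun m : ℕ => ttZ A lam d (m:ℤ) ≠ 0)).card : ℝ) * ρ ^ (2*N)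
      = ∑ _m ∈ (range (N+1)).filter (fun m : ℕ => ttZ A lam d (m:ℤ) ≠ 0), ρ ^ (2*N) := by
        rw [Finset.sum_const, nsmul_eq_mul]
    _ ≤ ∑ m ∈ (range (N+1)).filter (fun m : ℕ => ttZ A lam d (m:ℤ) ≠ 0), (Tz A lam d ρ (m:ℤ))^2 :=
        Finset.sum_le_sum h1
    _ ≤ ∑ m ∈ range (N+1), (Tz A lam d ρ (m:ℤ))^2 := by
        apply Finset.sum_le_sum_of_subset_of_nonneg (Finset.filter_subset _ _)
        intro i _ _; exact sq_nonneg _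

noncomputable def vz (A : Set ℕ) (lam : ℕ → ℤ) (d : ℕ) (ρ : ℝ) (n : ℤ) : ℝ :=
  ∑' a : ℕ, Tz A lam d ρ (n - a) * gz A ρ (a : ℤ)

lemma vz_neg {n : ℤ} (h : n < 0) : vz A lam d ρ n = 0 := by
  unfold vz
  rw [tsum_eq_sum (s := ∅)]
  · simp
  intro a _
  rw [Tz_neg A lam d (by omega), zero_mul]

lemma vz_natcast (n : ℕ) : vz A lam d ρ (n : ℤ) = ρ ^ n * Sfn A lam d n := by
  unfold vz
  rw [tsum_eq_sum (s := range (n+1))]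
  · have step : ∀ a ∈ range (n+1),
        Tz A lam d ρ ((n:ℤ) - a) * gz A ρ (a:ℤ)
          = ρ ^ n * (((ttZ A lam d ((n:ℤ) - a) : ℤ):ℝ) * chiR A (a:ℤ)) := by
      intro a ha
      rw [Finset.mem_range] at ha
      have h1 : (n:ℤ) - a = ((n - a : ℕ) : ℤ) := by omega
      rw [h1, Tz_natcast]
      unfold gz
      have h2 : ((a:ℤ)).toNat = a := by omega
      rw [h2]
      have h3 : ρ ^ (n - a) * ρ ^ a = ρ ^ n := by rw [← pow_add]; congr 1; omega
      rw [← h1, ← h3]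
      ring
    rw [Finset.sum_congr rfl step, ← Finset.mul_sum]
    congr 1
    unfold ttZ Sfn
    have : ∀ a ∈ range (n+1), ((∑ i ∈ range (d+1), lam i * chi A ((n:ℤ) - a - i) : ℤ):ℝ) * chiR A (a:ℤ)
        = ∑ i ∈ range (d+1), (lam i : ℝ) * (chiR A (((n:ℤ) - i) - a) * chiR A (a:ℤ)) := by
      intro a _
      push_cast
      rw [Finset.sum_mul]
      apply Finset.sum_congr rfl
      intro i _
      rw [chi_cast]
      have : (n:ℤ) - a - i = (n:ℤ) - i - a := by ring
      rw [this]; ring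
    rw [Finset.sum_congr rfl this, Finset.sum_comm]
    apply Finset.sum_congr rfl
    intro i hi
    rw [← Finset.mul_sum]
    congr 1
    rw [Rz_eq_sum A ((n:ℤ) - i) n (by omega)]
  · intro a ha
    rw [Finset.mem_range] at ha
    rw [Tz_neg A lam d (by omega), zero_mul]
end part3
section part4
variable (A : Set ℕ) (lam : ℕ → ℤ) (d : ℕ) {ρ : ℝ}

/-- Abbreviation for the ℓ¹ norm of lambda. -/
noncomputable def Lam (lam : ℕ → ℤ) (d : ℕ) : ℝ := ∑ i ∈ range (d+1), |(lam i : ℝ)|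

lemma Lam_nonneg : 0 ≤ Lam lam d := Finset.sum_nonneg fun i _ => abs_nonneg _

/-- the correlation summand -/
noncomputable def uu (A : Set ℕ) (lam : ℕ → ℤ) (d : ℕ) (ρ : ℝ) (i : ℤ) (a : ℕ) : ℝ :=
  Tz A lam d ρ ((a : ℤ) + i) * gz A ρ (a : ℤ)

noncomputable def wz (A : Set ℕ) (lam : ℕ → ℤ) (d : ℕ) (ρ : ℝ) (i : ℤ) : ℝ :=
  ∑' a : ℕ, uu A lam d ρ i a

lemma uu_abs_le (hρ0 : 0 < ρ) (hρ1 : ρ ≤ 1) (i : ℤ) (a : ℕ) :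
    |uu A lam d ρ i a| ≤ Lam lam d * (Real.sqrt ρ) ^ (i.natAbs + a) := by
  set σ := Real.sqrt ρ with hσ
  have hσ0 : 0 ≤ σ := Real.sqrt_nonneg _
  have hσ1 : σ ≤ 1 := by
    rw [hσ, show (1:ℝ) = Real.sqrt 1 by simp]
    exact Real.sqrt_le_sqrt hρ1
  have hσsq : σ ^ 2 = ρ := Real.sq_sqrt (le_of_lt hρ0)
  unfold uu
  rcases lt_or_ge ((a:ℤ) + i) 0 with h | h
  · rw [Tz_neg A lam d h, zero_mul, abs_zero]
    exact mul_nonneg (Lam_nonneg lam d) (pow_nonneg hσ0 _)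
  · rw [abs_mul]
    have h1 : |Tz A lam d ρ ((a:ℤ) + i)| ≤ Lam lam d * ρ ^ ((a:ℤ) + i).toNat :=
      Tz_abs_le' A lam d (le_of_lt hρ0) hρ1 _
    have h2 : |gz A ρ (a:ℤ)| ≤ ρ ^ a := by
      rw [abs_of_nonneg (gz_nonneg A (le_of_lt hρ0) _)]
      have := gz_le A (le_of_lt hρ0) (a : ℤ)
      simpa using this
    calc |Tz A lam d ρ ((a:ℤ) + i)| * |gz A ρ (a:ℤ)|
        ≤ (Lam lam d * ρ ^ ((a:ℤ) + i).toNat) * ρ ^ a := by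
          apply mul_le_mul h1 h2 (abs_nonneg _)
          exact mul_nonneg (Lam_nonneg lam d) (pow_nonneg (le_of_lt hρ0) _)
      _ = Lam lam d * σ ^ (2 * (((a:ℤ) + i).toNat + a)) := by
          rw [pow_mul, hσsq, mul_assoc, ← pow_add]
      _ ≤ Lam lam d * σ ^ (i.natAbs + a) := by
          apply mul_le_mul_of_nonneg_left _ (Lam_nonneg lam d)
          apply pow_le_pow_of_le_one hσ0 hσ1
          omega
  done

lemma summable_geom_int {c : ℝ} (hc0 : 0 ≤ c) (hc1 : c < 1) :
    Summable (fun i : ℤ => c ^ i.natAbs) := by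
  apply Summable.of_nat_of_neg
  · simpa using summable_geometric_of_lt_one hc0 hc1
  · simpa using summable_geometric_of_lt_one hc0 hc1

lemma sqrt_lt_one {ρ : ℝ} (hρ0 : 0 < ρ) (hρ1 : ρ < 1) : Real.sqrt ρ < 1 := by
  rw [show (1:ℝ) = Real.sqrt 1 by simp]
  exact Real.sqrt_lt_sqrt (le_of_lt hρ0) hρ1

set_option maxHeartbeats 2000000 in
lemma summable_dom (hρ0 : 0 < ρ) (hρ1 : ρ < 1) :
    Summable (fun q : ℤ × ℕ × ℕ =>
      (Lam lam d * (Real.sqrt ρ) ^ (q.1.natAbs + q.2.1)) *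
      (Lam lam d * (Real.sqrt ρ) ^ (q.1.natAbs + q.2.2))) := by
  have hσ0 : 0 ≤ Real.sqrt ρ := Real.sqrt_nonneg _
  have hσ1 : Real.sqrt ρ < 1 := sqrt_lt_one hρ0 hρ1
  have hσsq : (Real.sqrt ρ) ^ 2 = ρ := Real.sq_sqrt hρ0.le
  have hsq : ∀ q : ℤ × ℕ × ℕ,
      (Lam lam d * Lam lam d) * (ρ ^ q.1.natAbs * ((Real.sqrt ρ) ^ q.2.1 * (Real.sqrt ρ) ^ q.2.2))
      = (Lam lam d * (Real.sqrt ρ) ^ (q.1.natAbs + q.2.1)) * (Lam lam d * (Real.sqrt ρ) ^ (q.1.natAbs + q.2.2)) := by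
    intro q
    have h4 : ρ ^ q.1.natAbs = (Real.sqrt ρ ^ 2) ^ q.1.natAbs := by rw [hσsq]
    rw [h4, ← pow_mul, pow_add, pow_add, two_mul, pow_add]
    ring
  refine Summable.congr ?_ hsq
  apply Summable.mul_left
  have h2 : Summable (fun p : ℕ × ℕ => (Real.sqrt ρ) ^ p.1 * (Real.sqrt ρ) ^ p.2) :=
    Summable.mul_of_nonneg (summable_geometric_of_lt_one hσ0 hσ1)
      (summable_geometric_of_lt_one hσ0 hσ1)
      (fun a => pow_nonneg hσ0 _) (fun a => pow_nonneg hσ0 _)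
  have h3 : Summable (fun i : ℤ => ρ ^ i.natAbs) := summable_geom_int hρ0.le hρ1
  exact Summable.mul_of_nonneg h3 h2 (fun i => pow_nonneg hρ0.le _)
    (fun p => mul_nonneg (pow_nonneg hσ0 _) (pow_nonneg hσ0 _))

lemma summable_uu (hρ0 : 0 < ρ) (hρ1 : ρ < 1) (i : ℤ) :
    Summable (fun a : ℕ => uu A lam d ρ i a) := by
  apply Summable.of_abs
  apply Summable.of_nonneg_of_le (fun a => abs_nonneg _)
    (fun a => uu_abs_le A lam d hρ0 (le_of_lt hρ1) i a)
  have : Summable (fun a : ℕ => (Real.sqrt ρ) ^ a) :=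
    summable_geometric_of_lt_one (Real.sqrt_nonneg _) (sqrt_lt_one hρ0 hρ1)
  have h2 := (this.mul_left (Lam lam d * (Real.sqrt ρ) ^ i.natAbs))
  apply h2.congr
  intro a
  rw [pow_add]; ring

/-- the actual correlation family is summable -/
lemma summable_H (hρ0 : 0 < ρ) (hρ1 : ρ < 1) :
    Summable (fun q : ℤ × ℕ × ℕ => uu A lam d ρ q.1 q.2.1 * uu A lam d ρ q.1 q.2.2) := by
  apply Summable.of_abs
  refine Summable.of_nonneg_of_le (fun q => abs_nonneg _) ?_ (summable_dom lam d hρ0 hρ1)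
  intro q
  rw [abs_mul]
  apply mul_le_mul (uu_abs_le A lam d hρ0 (le_of_lt hρ1) _ _)
    (uu_abs_le A lam d hρ0 (le_of_lt hρ1) _ _) (abs_nonneg _)
  exact mul_nonneg (Lam_nonneg lam d) (pow_nonneg (Real.sqrt_nonneg _) _)

end part4
section part5
variable (A : Set ℕ) (lam : ℕ → ℤ) (d : ℕ) {ρ : ℝ}

/-- the swap equivalence -/
def swapE : ℤ × ℕ × ℕ ≃ ℤ × ℕ × ℕ where
  toFun q := ((q.2.1 : ℤ) + (q.2.2 : ℤ) + q.1, q.2.2, q.2.1)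
  invFun q := (q.1 - (q.2.2 : ℤ) - (q.2.1 : ℤ), q.2.2, q.2.1)
  left_inv := by
    rintro ⟨i, a, b⟩; simp; ring
  right_inv := by
    rintro ⟨n, a, b⟩; simp

lemma Tz_abs_le_const (hρ0 : 0 ≤ ρ) (hρ1 : ρ ≤ 1) (m : ℤ) :
    |Tz A lam d ρ m| ≤ Lam lam d := by
  refine le_trans (Tz_abs_le' A lam d hρ0 hρ1 m) ?_
  calc Lam lam d * ρ ^ m.toNat ≤ Lam lam d * 1 :=
        mul_le_mul_of_nonneg_left (pow_le_one₀ hρ0 hρ1) (Lam_nonneg lam d)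
    _ = Lam lam d := mul_one _

lemma summable_uv (hρ0 : 0 < ρ) (hρ1 : ρ < 1) (n : ℤ) :
    Summable (fun a : ℕ => Tz A lam d ρ (n - a) * gz A ρ (a : ℤ)) := by
  apply Summable.of_abs
  apply Summable.of_nonneg_of_le (fun a => abs_nonneg _) _
    ((summable_geometric_of_lt_one hρ0.le hρ1).mul_left (Lam lam d))
  intro a
  rw [abs_mul]
  apply mul_le_mul (Tz_abs_le_const A lam d hρ0.le hρ1.le _) _ (abs_nonneg _) (Lam_nonneg lam d)
  rw [abs_of_nonneg (gz_nonneg A hρ0.le _)]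
  simpa using gz_le A hρ0.le (a : ℤ)

/-- squared tsum as a double tsum -/
lemma sq_tsum_eq {u : ℕ → ℝ} (hu : Summable u) (hp : Summable (fun p : ℕ × ℕ => u p.1 * u p.2)) :
    (∑' a : ℕ, u a)^2 = ∑' p : ℕ × ℕ, u p.1 * u p.2 := by
  rw [Summable.tsum_prod' hp (fun a => (hu.mul_left (u a)))]
  have : ∀ a : ℕ, ∑' b : ℕ, u a * u b = u a * ∑' b : ℕ, u b := fun a => tsum_mul_left
  rw [tsum_congr this, tsum_mul_right, sq]

lemma corr_eq_conv (hρ0 : 0 < ρ) (hρ1 : ρ < 1) :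
    (∑' i : ℤ, (wz A lam d ρ i)^2 = ∑' n : ℕ, (vz A lam d ρ (n:ℤ))^2)
    ∧ Summable (fun i : ℤ => (wz A lam d ρ i)^2) := by
  set H : ℤ × ℕ × ℕ → ℝ := fun q => uu A lam d ρ q.1 q.2.1 * uu A lam d ρ q.1 q.2.2 with hHdef
  set Hc : ℤ × ℕ × ℕ → ℝ :=
    fun q => Tz A lam d ρ (q.1 - q.2.1) * gz A ρ (q.2.1 : ℤ) *
      (Tz A lam d ρ (q.1 - q.2.2) * gz A ρ (q.2.2 : ℤ)) with hHcdef
  have hH : Summable H := summable_H A lam d hρ0 hρ1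
  have hcomp : ∀ q : ℤ × ℕ × ℕ, Hc (swapE q) = H q := by
    rintro ⟨i, a, b⟩
    simp only [hHdef, hHcdef, swapE, Equiv.coe_fn_mk]
    unfold uu
    have e1 : (a:ℤ) + (b:ℤ) + i - (b:ℤ) = (a:ℤ) + i := by ring
    have e2 : (a:ℤ) + (b:ℤ) + i - (a:ℤ) = (b:ℤ) + i := by ring
    rw [e1, e2]
    ring
  have hHc : Summable Hc := by
    rw [← swapE.summable_iff]
    exact Summable.congr hH (fun q => (hcomp q).symm)
  have hstep1 : ∀ i : ℤ, (wz A lam d ρ i)^2 = ∑' p : ℕ × ℕ, H (i, p) := by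
    intro i
    exact sq_tsum_eq (summable_uu A lam d hρ0 hρ1 i) (hH.prod_factor i)
  have hsumw : Summable (fun i : ℤ => (wz A lam d ρ i)^2) := by
    have h1 := (hH.hasSum.prod_fiberwise (fun i => (hH.prod_factor i).hasSum)).summable
    exact h1.congr (fun i => (hstep1 i).symm)
  have hL : ∑' i : ℤ, (wz A lam d ρ i)^2 = ∑' q : ℤ × ℕ × ℕ, H q := by
    rw [tsum_congr hstep1, ← Summable.tsum_prod' hH (fun i => hH.prod_factor i)]
  have hmid : ∑' q : ℤ × ℕ × ℕ, H q = ∑' q : ℤ × ℕ × ℕ, Hc q := by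
    rw [← Equiv.tsum_eq swapE Hc, tsum_congr hcomp]
  have hstep2 : ∀ n : ℤ, (vz A lam d ρ n)^2 = ∑' p : ℕ × ℕ, Hc (n, p) := by
    intro n
    exact sq_tsum_eq (summable_uv A lam d hρ0 hρ1 n) (hHc.prod_factor n)
  have hR : ∑' q : ℤ × ℕ × ℕ, Hc q = ∑' n : ℤ, (vz A lam d ρ n)^2 := by
    rw [Summable.tsum_prod' hHc (fun n => hHc.prod_factor n)]
    exact tsum_congr (fun n => (hstep2 n).symm)
  have hfin : ∑' n : ℕ, (vz A lam d ρ (n:ℤ))^2 = ∑' n : ℤ, (vz A lam d ρ n)^2 := by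
    apply Function.Injective.tsum_eq (f := fun n : ℤ => (vz A lam d ρ n)^2)
      (fun a b h => by exact_mod_cast h)
    intro n hn
    rcases lt_or_ge n 0 with h | h
    · exfalso
      apply hn
      simp only [Function.mem_support] at *
      rw [vz_neg A lam d h]
      norm_num
    · exact ⟨n.toNat, by omega⟩
  exact ⟨by rw [hL, hmid, hR, ← hfin], hsumw⟩
end part5
section part6
variable (A : Set ℕ) (lam : ℕ → ℤ) (d : ℕ) {ρ : ℝ}

lemma summable_Tz_sq (hρ0 : 0 < ρ) (hρ1 : ρ < 1) :
    Summable (fun m : ℕ => (Tz A lam d ρ (m:ℤ))^2) := by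
  have hg : Summable (fun m : ℕ => Lam lam d ^ 2 * (ρ^2)^m) :=
    (summable_geometric_of_lt_one (by positivity) (by nlinarith)).mul_left _
  refine Summable.of_nonneg_of_le (fun m => sq_nonneg _) ?_ hg
  intro m
  have h : |Tz A lam d ρ (m:ℤ)| ≤ Lam lam d * ρ^m := Tz_abs_le_nat A lam d hρ0.le m
  calc (Tz A lam d ρ (m:ℤ))^2 = |Tz A lam d ρ (m:ℤ)|^2 := (sq_abs _).symm
    _ ≤ (Lam lam d * ρ^m)^2 := by nlinarith [abs_nonneg (Tz A lam d ρ (m:ℤ))]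
    _ = Lam lam d^2 * (ρ^2)^m := by ring

lemma summable_Tg (hρ0 : 0 < ρ) (hρ1 : ρ < 1) (i : ℕ) :
    Summable (fun m : ℕ => Tz A lam d ρ (m:ℤ) * gz A ρ ((m:ℤ) - (i:ℤ))) := by
  have hg : Summable (fun m : ℕ => Lam lam d * ρ^m) :=
    (summable_geometric_of_lt_one hρ0.le hρ1).mul_left _
  apply Summable.of_abs
  refine Summable.of_nonneg_of_le (fun m => abs_nonneg _) ?_ hg
  intro m
  rw [abs_mul]
  calc |Tz A lam d ρ (m:ℤ)| * |gz A ρ ((m:ℤ) - i)|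
      ≤ (Lam lam d * ρ^m) * 1 := by
        apply mul_le_mul (Tz_abs_le_nat A lam d hρ0.le m) _ (abs_nonneg _)
          (by positivity)
        rw [abs_of_nonneg (gz_nonneg A hρ0.le _)]
        exact gz_le_one A hρ0.le hρ1.le _
    _ = Lam lam d * ρ^m := mul_one _

lemma X_eq (hρ0 : 0 < ρ) (hρ1 : ρ < 1) :
    ∑' m : ℕ, (Tz A lam d ρ (m:ℤ))^2
      = ∑ i ∈ range (d+1), ((lam i : ℝ) * ρ^i) * wz A lam d ρ (i:ℤ) := by
  have hexp : ∀ m : ℕ, (Tz A lam d ρ (m:ℤ))^2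
      = ∑ i ∈ range (d+1), ((lam i:ℝ) * ρ^i) * (Tz A lam d ρ (m:ℤ) * gz A ρ ((m:ℤ) - i)) := by
    intro m
    rw [sq]
    nth_rewrite 2 [show Tz A lam d ρ (m:ℤ)
      = ∑ i ∈ range (d+1), (lam i:ℝ) * ρ^i * gz A ρ ((m:ℤ) - i) from rfl]
    rw [Finset.mul_sum]
    apply Finset.sum_congr rfl
    intro i _
    ring
  rw [tsum_congr hexp, Summable.tsum_finsetSum (fun i _ => ((summable_Tg A lam d hρ0 hρ1 i).mul_left _))]
  apply Finset.sum_congr rfl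
  intro i _
  rw [tsum_mul_left]
  congr 1
  have hinj : Function.Injective (fun a : ℕ => a + i) := add_left_injective i
  have hsupp : Function.support (fun m : ℕ => Tz A lam d ρ (m:ℤ) * gz A ρ ((m:ℤ) - i))
      ⊆ Set.range (fun a : ℕ => a + i) := by
    intro m hm
    simp only [Function.mem_support] at hm
    have : ¬ ((m:ℤ) - i < 0) := by
      intro hlt
      rw [gz_neg A hlt, mul_zero] at hm
      exact hm rfl
    refine ⟨m - i, ?_⟩
    show m - i + i = m
    omega
  have := Function.Injective.tsum_eq hinj
    (f := fun m : ℕ => Tz A lam d ρ (m:ℤ) * gz A ρ ((m:ℤ) - i)) hsupp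
  rw [← this]
  unfold wz uu
  apply tsum_congr
  intro a
  have e2 : ((a + i : ℕ) : ℤ) = (a:ℤ) + (i:ℤ) := by push_cast; ring
  have e3 : (a:ℤ) + (i:ℤ) - (i:ℤ) = (a:ℤ) := by ring
  simp only [e2, e3]

lemma V_le (hρ0 : 0 < ρ) (hρ1 : ρ < 1) (K : ℝ) (hK : 0 ≤ K) (n₀ : ℕ)
    (hS : ∀ n, n₀ ≤ n → |Sfn A lam d n| ≤ K) :
    ∑' n : ℕ, (vz A lam d ρ (n:ℤ))^2
      ≤ (∑ n ∈ range n₀, (Sfn A lam d n)^2) + K^2 * (1-ρ^2)⁻¹ := by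
  set g : ℕ → ℝ := fun n => (if n < n₀ then (Sfn A lam d n)^2 else 0) + K^2 * (ρ^2)^n with hg
  have hρsq1 : ρ^2 < 1 := by nlinarith
  have hρsq0 : (0:ℝ) ≤ ρ^2 := sq_nonneg _
  have hv : ∀ n : ℕ, (vz A lam d ρ (n:ℤ))^2 ≤ g n := by
    intro n
    rw [vz_natcast]
    show _ ≤ (if n < n₀ then (Sfn A lam d n)^2 else 0) + K^2 * (ρ^2)^n
    have hpow1 : (ρ^2)^n ≤ 1 := pow_le_one₀ hρsq0 hρsq1.le
    have hpow0 : (0:ℝ) ≤ (ρ^2)^n := pow_nonneg hρsq0 _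
    have hexp : (ρ^n * Sfn A lam d n)^2 = (ρ^2)^n * (Sfn A lam d n)^2 := by ring
    rcases lt_or_ge n n₀ with h | h
    · rw [if_pos h, hexp]
      nlinarith [sq_nonneg (Sfn A lam d n), sq_nonneg K]
    · rw [if_neg (not_lt.2 h), hexp]
      have h2 := hS n h
      have h3 : (Sfn A lam d n)^2 ≤ K^2 := by
        rw [← sq_abs (Sfn A lam d n)]
        nlinarith [abs_nonneg (Sfn A lam d n)]
      nlinarith
  have hsum1 : Summable (fun n : ℕ => (if n < n₀ then (Sfn A lam d n)^2 else 0)) := by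
    apply summable_of_ne_finset_zero (s := range n₀)
    intro n hn
    rw [Finset.mem_range] at hn
    rw [if_neg hn]
  have hsum2 : Summable (fun n : ℕ => K^2 * (ρ^2)^n) :=
    (summable_geometric_of_lt_one hρsq0 hρsq1).mul_left _
  have hgsum : Summable g := hsum1.add hsum2
  calc ∑' n : ℕ, (vz A lam d ρ (n:ℤ))^2 ≤ ∑' n : ℕ, g n :=
        Summable.tsum_le_tsum hv (Summable.of_nonneg_of_le (fun n => sq_nonneg _) hv hgsum) hgsum
    _ = (∑' n : ℕ, (if n < n₀ then (Sfn A lam d n)^2 else 0)) + ∑' n : ℕ, K^2 * (ρ^2)^n :=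
        Summable.tsum_add hsum1 hsum2
    _ = (∑ n ∈ range n₀, (Sfn A lam d n)^2) + K^2 * (1-ρ^2)⁻¹ := by
        congr 1
        · rw [tsum_eq_sum (s := range n₀)]
          · apply Finset.sum_congr rfl
            intro n hn
            rw [Finset.mem_range] at hn
            rw [if_pos hn]
          · intro n hn
            rw [Finset.mem_range] at hn
            rw [if_neg hn]
        · rw [tsum_mul_left, tsum_geometric_of_lt_one hρsq0 hρsq1]

lemma key (hρ0 : 0 < ρ) (hρ1 : ρ < 1) (K : ℝ) (hK : 0 ≤ K) (n₀ N : ℕ)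
    (hS : ∀ n, n₀ ≤ n → |Sfn A lam d n| ≤ K) :
    (Bf A lam d N : ℝ) * ρ^(2*N)
      ≤ Lam lam d * Real.sqrt ((∑ n ∈ range n₀, (Sfn A lam d n)^2) + K^2 * (1-ρ^2)⁻¹) := by
  set X := ∑' m : ℕ, (Tz A lam d ρ (m:ℤ))^2 with hXdef
  set M := (∑ n ∈ range n₀, (Sfn A lam d n)^2) + K^2 * (1-ρ^2)⁻¹ with hMdef
  obtain ⟨hWV, hsumw⟩ := corr_eq_conv A lam d hρ0 hρ1
  have hBX : (Bf A lam d N : ℝ) * ρ^(2*N) ≤ X := by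
    refine le_trans (Bf_le_sum A lam d hρ0 hρ1.le N) ?_
    exact Summable.sum_le_tsum _ (fun m _ => sq_nonneg _) (summable_Tz_sq A lam d hρ0 hρ1)
  have hXnn : 0 ≤ X := tsum_nonneg fun m => sq_nonneg _
  have hMnn : 0 ≤ M := by
    rw [hMdef]
    have h1 : (0:ℝ) ≤ (1-ρ^2)⁻¹ := by
      apply inv_nonneg.2; nlinarith
    have h2 : (0:ℝ) ≤ ∑ n ∈ range n₀, (Sfn A lam d n)^2 :=
      Finset.sum_nonneg fun n _ => sq_nonneg _
    positivity
  have hCS : X^2 ≤ (Lam lam d)^2 * (∑' i : ℤ, (wz A lam d ρ i)^2) := by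
    rw [hXdef, X_eq A lam d hρ0 hρ1]
    refine le_trans (Finset.sum_mul_sq_le_sq_mul_sq (range (d+1))
      (fun i => (lam i:ℝ) * ρ^i) (fun i => wz A lam d ρ (i:ℤ))) ?_
    have h1 : ∑ i ∈ range (d+1), ((lam i:ℝ)*ρ^i)^2 ≤ (Lam lam d)^2 := by
      calc ∑ i ∈ range (d+1), ((lam i:ℝ)*ρ^i)^2 ≤ ∑ i ∈ range (d+1), |(lam i:ℝ)|^2 := by
            apply Finset.sum_le_sum
            intro i _
            rw [mul_pow, ← sq_abs ((lam i:ℝ))]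
            have h3 : (ρ^i)^2 ≤ 1 := by
              have : ρ^i ≤ 1 := pow_le_one₀ hρ0.le hρ1.le
              nlinarith [pow_nonneg hρ0.le i]
            nlinarith [sq_nonneg ((lam i:ℝ)), sq_abs ((lam i:ℝ)), abs_nonneg ((lam i:ℝ)),
              pow_nonneg hρ0.le i, sq_nonneg (ρ^i)]
        _ ≤ (Lam lam d)^2 := by
            unfold Lam
            exact Finset.sum_sq_le_sq_sum_of_nonneg (fun i _ => abs_nonneg _)
    have h2 : ∑ i ∈ range (d+1), (wz A lam d ρ (i:ℤ))^2 ≤ ∑' i : ℤ, (wz A lam d ρ i)^2 := by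
      have himg : ∑ i ∈ range (d+1), (wz A lam d ρ (i:ℤ))^2
          = ∑ j ∈ (range (d+1)).image (fun i : ℕ => (i:ℤ)), (wz A lam d ρ j)^2 := by
        rw [Finset.sum_image (by intro a _ b _ h; simpa using h)]
      rw [himg]
      exact Summable.sum_le_tsum _ (fun j _ => sq_nonneg _) hsumw
    apply mul_le_mul h1 h2 (Finset.sum_nonneg fun i _ => sq_nonneg _)
      (sq_nonneg _)
  have hXM : X^2 ≤ (Lam lam d)^2 * M := by
    refine le_trans hCS ?_
    apply mul_le_mul_of_nonneg_left _ (sq_nonneg _)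
    rw [hWV]
    exact V_le A lam d hρ0 hρ1 K hK n₀ hS
  calc (Bf A lam d N : ℝ) * ρ^(2*N) ≤ X := hBX
    _ = Real.sqrt (X^2) := (Real.sqrt_sq hXnn).symm
    _ ≤ Real.sqrt ((Lam lam d)^2 * M) := Real.sqrt_le_sqrt hXM
    _ = Lam lam d * Real.sqrt M := by
        rw [Real.sqrt_mul (sq_nonneg _), Real.sqrt_sq (Lam_nonneg lam d)]
end part6
section part7
variable (A : Set ℕ) (lam : ℕ → ℤ) (d : ℕ)

lemma final (hlam : ∃ i ≤ d, lam i ≠ 0) :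
    limsup (fun n : ℕ => ((Real.sqrt 2 / (Real.exp 2 * Lam lam d) *
          ((Bf A lam d n : ℝ) / Real.sqrt n) : ℝ) : EReal)) atTop
      ≤ limsup (fun n : ℕ => ((|Sfn A lam d n| : ℝ) : EReal)) atTop := by
  classical
  have hΛpos : 0 < Lam lam d := by
    obtain ⟨i, hid, hne⟩ := hlam
    unfold Lam
    apply Finset.sum_pos' (fun j _ => abs_nonneg _)
    refine ⟨i, Finset.mem_range.2 (by omega), ?_⟩
    have : (lam i : ℝ) ≠ 0 := by exact_mod_cast hne
    exact abs_pos.2 this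
  set F : ℕ → EReal := fun n => ((|Sfn A lam d n| : ℝ) : EReal) with hF
  set G : ℕ → EReal := fun n => ((Real.sqrt 2 / (Real.exp 2 * Lam lam d) *
    ((Bf A lam d n : ℝ) / Real.sqrt n) : ℝ) : EReal) with hG
  have hFnn : (0:EReal) ≤ limsup F atTop := by
    refine le_limsup_of_frequently_le ?_ ?_
    · apply Filter.Eventually.frequently
      apply Filter.Eventually.of_forall
      intro n
      show (0:EReal) ≤ ((|Sfn A lam d n| : ℝ) : EReal)
      rw [show (0:EReal) = ((0:ℝ):EReal) by norm_num]
      exact EReal.coe_le_coe_iff.2 (abs_nonneg _)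
    · isBoundedDefault
  rcases eq_top_or_lt_top (limsup F atTop) with htop | hlt
  · rw [htop]; exact le_top
  have main : ∀ K : ℝ, limsup F atTop < (K:EReal) → limsup G atTop ≤ (K:EReal) := by
    intro K hK
    have hK0 : (0:EReal) < (K:EReal) := lt_of_le_of_lt hFnn hK
    have hK0' : (0:ℝ) < K := by exact_mod_cast hK0
    have hev : ∀ᶠ n in atTop, F n < (K:EReal) := eventually_lt_of_limsup_lt hK
    have hev' : ∀ᶠ n in atTop, |Sfn A lam d n| ≤ K := by
      filter_upwards [hev] with n hn
      have : ((|Sfn A lam d n| : ℝ) : EReal) < ((K:ℝ):EReal) := hn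
      exact (EReal.coe_lt_coe_iff.1 this).le
    obtain ⟨n₀, hn₀⟩ := eventually_atTop.1 hev'
    set C₀ := ∑ n ∈ range n₀, (Sfn A lam d n)^2 with hC₀
    have hC₀nn : 0 ≤ C₀ := Finset.sum_nonneg fun n _ => sq_nonneg _
    set bnd : ℕ → ℝ := fun N => Real.sqrt (2*C₀/N + K^2 * Real.exp (2/N)) with hbnd
    have hGb : ∀ᶠ N in atTop, G N ≤ ((bnd N : ℝ) : EReal) := by
      rw [eventually_atTop]
      refine ⟨1, fun N hN => ?_⟩
      have hN0 : (0:ℝ) < (N:ℝ) := by exact_mod_cast hN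
      set ρ : ℝ := Real.exp (-(1/(N:ℝ))) with hρdef
      have hρ0 : 0 < ρ := Real.exp_pos _
      have hρ1 : ρ < 1 := by
        rw [hρdef, Real.exp_lt_one_iff]
        have : (0:ℝ) < 1/(N:ℝ) := by positivity
        linarith
      have hkey := key A lam d hρ0 hρ1 K hK0'.le n₀ N hn₀
      set M := C₀ + K^2 * (1-ρ^2)⁻¹ with hM
      set M' := C₀ + K^2 * (Real.exp (2/(N:ℝ)) * N / 2) with hM'
      have hx : ρ^2 = Real.exp (-(2/(N:ℝ))) := by
        rw [hρdef, sq, ← Real.exp_add]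
        congr 1
        ring
      have hEE : Real.exp (-(2/(N:ℝ))) * Real.exp (2/(N:ℝ)) = 1 := by
        rw [← Real.exp_add]; norm_num
      have hEpos : (0:ℝ) < Real.exp (-(2/(N:ℝ))) := Real.exp_pos _
      have h1mE : 2/(N:ℝ) * Real.exp (-(2/(N:ℝ))) ≤ 1 - Real.exp (-(2/(N:ℝ))) := by
        nlinarith [Real.add_one_le_exp (2/(N:ℝ)), Real.exp_pos (-(2/(N:ℝ)))]
      have hxpos : (0:ℝ) < 2/(N:ℝ) := by positivity
      have h1mEpos : (0:ℝ) < 1 - ρ^2 := by rw [hx]; nlinarith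
      have hgeo : (1 - ρ^2)⁻¹ ≤ Real.exp (2/(N:ℝ)) * N / 2 := by
        rw [hx]
        have heq : Real.exp (2/(N:ℝ)) * N / 2 = (2/(N:ℝ) * Real.exp (-(2/(N:ℝ))))⁻¹ := by
          rw [mul_inv, Real.exp_neg, inv_inv, inv_div]
          ring
        rw [heq]
        exact inv_anti₀ (by positivity) h1mE
      have hMle : M ≤ M' := by
        rw [hM, hM']
        have := mul_le_mul_of_nonneg_left hgeo (sq_nonneg K)
        linarith
      have hM'nn : 0 ≤ M' := by
        rw [hM']
        have : (0:ℝ) ≤ K^2 * (Real.exp (2/(N:ℝ)) * N / 2) := by positivity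
        linarith
      have hρN : ρ^(2*N) = Real.exp (-2) := by
        rw [hρdef, ← Real.exp_nat_mul]
        congr 1
        push_cast
        field_simp
      have hBf : (Bf A lam d N : ℝ) ≤ Real.exp 2 * (Lam lam d * Real.sqrt M') := by
        have h1 : (Bf A lam d N : ℝ) * Real.exp (-2) ≤ Lam lam d * Real.sqrt M := by
          rw [← hρN]; exact hkey
        have h2 : Lam lam d * Real.sqrt M ≤ Lam lam d * Real.sqrt M' :=
          mul_le_mul_of_nonneg_left (Real.sqrt_le_sqrt hMle) (Lam_nonneg lam d)
        calc (Bf A lam d N : ℝ) = ((Bf A lam d N : ℝ) * Real.exp (-2)) * Real.exp 2 := by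
              rw [mul_assoc, ← Real.exp_add]; norm_num
          _ ≤ (Lam lam d * Real.sqrt M') * Real.exp 2 :=
              mul_le_mul_of_nonneg_right (le_trans h1 h2) (Real.exp_pos 2).le
          _ = Real.exp 2 * (Lam lam d * Real.sqrt M') := by ring
      have hreal : Real.sqrt 2 / (Real.exp 2 * Lam lam d) * ((Bf A lam d N : ℝ) / Real.sqrt N)
          ≤ bnd N := by
        have hsN : (0:ℝ) < Real.sqrt N := Real.sqrt_pos.2 hN0
        have hc : (0:ℝ) ≤ Real.sqrt 2 / (Real.exp 2 * Lam lam d) := by positivity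
        calc Real.sqrt 2 / (Real.exp 2 * Lam lam d) * ((Bf A lam d N : ℝ) / Real.sqrt N)
            ≤ Real.sqrt 2 / (Real.exp 2 * Lam lam d) *
                ((Real.exp 2 * (Lam lam d * Real.sqrt M')) / Real.sqrt N) := by
              apply mul_le_mul_of_nonneg_left _ hc
              exact div_le_div_of_nonneg_right hBf hsN.le
          _ = Real.sqrt 2 * Real.sqrt M' / Real.sqrt N := by
              field_simp
          _ = Real.sqrt (2 * M' / N) := by
              rw [Real.sqrt_div (by positivity) (N:ℝ), Real.sqrt_mul (by norm_num : (0:ℝ) ≤ 2)]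
          _ = bnd N := by
              rw [hbnd]
              congr 1
              rw [hM']
              field_simp
      rw [hG]
      exact EReal.coe_le_coe_iff.2 hreal
    have htend : Tendsto (fun N : ℕ => ((bnd N : ℝ):EReal)) atTop (nhds ((K:ℝ):EReal)) := by
      rw [EReal.tendsto_coe]
      have t1 : Tendsto (fun N : ℕ => 2*C₀/(N:ℝ)) atTop (nhds 0) :=
        tendsto_const_div_atTop_nhds_zero_nat (2*C₀)
      have t2 : Tendsto (fun N : ℕ => 2/(N:ℝ)) atTop (nhds 0) :=
        tendsto_const_div_atTop_nhds_zero_nat 2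
      have t3 : Tendsto (fun N : ℕ => Real.exp (2/(N:ℝ))) atTop (nhds 1) := by
        have := (Real.continuous_exp.tendsto 0).comp t2
        simpa [Function.comp_def] using this
      have t4 : Tendsto (fun N : ℕ => K^2 * Real.exp (2/(N:ℝ))) atTop (nhds (K^2)) := by
        have := t3.const_mul (K^2)
        simpa using this
      have t5 : Tendsto (fun N : ℕ => 2*C₀/(N:ℝ) + K^2 * Real.exp (2/(N:ℝ))) atTop
          (nhds (K^2)) := by
        have := t1.add t4
        simpa using this
      have t6 := (Real.continuous_sqrt.tendsto (K^2)).comp t5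
      have t7 : Tendsto (fun N : ℕ => Real.sqrt (2*C₀/(N:ℝ) + K^2 * Real.exp (2/(N:ℝ)))) atTop
          (nhds (Real.sqrt (K^2))) := t6
      rw [Real.sqrt_sq hK0'.le] at t7
      exact t7
    calc limsup G atTop ≤ limsup (fun N : ℕ => ((bnd N : ℝ):EReal)) atTop :=
          limsup_le_limsup hGb
      _ = ((K:ℝ):EReal) := htend.limsup_eq
  by_contra hcon
  push_neg at hcon
  obtain ⟨x, hx1, hx2⟩ := EReal.lt_iff_exists_real_btwn.1 hcon
  exact absurd (main x hx1) (not_le.2 hx2)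
end part7

end EF7

theorem stmt7 (d : ℕ) (lam : ℕ → ℤ)
    (hlam : ∃ i ≤ d, lam i ≠ 0)
    (hsum : ∑ i ∈ Finset.range (d + 1), lam i = 0)
    (A : Set ℕ) (hA : A.Infinite) :
    limsup (fun n : ℕ =>
        ((|∑ i ∈ Finset.range (d + 1), (lam i : ℝ) * Rz A ((n : ℤ) - i)| : ℝ) : EReal)) atTop
      ≥ limsup (fun n : ℕ =>
        ((Real.sqrt 2 / (Real.exp 2 * ∑ i ∈ Finset.range (d + 1), |(lam i : ℝ)|) *
          ((Bf A lam d n : ℝ) / Real.sqrt n) : ℝ) : EReal)) atTop :=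
  EF7.final A lam d hlam
end

section
/- Let d ≥ 0 and let λ_0,...,λ_d be integers with Σ_{i=0}^d λ_i = 0, not all zero. For every sufficiently large positive integer M, there exists a set C ⊆ [0, M(d+1)-1] such that |R_C(n) - R_C(n-1)| ≤ 12·√(M(d+1)·log(M(d+1))) for every nonnegative integer n, and B(C,λ,M(d+1)-1) ≥ M/2^{d+2}. -/
open Filter Finset
open scoped Classical

namespace L1

variable {N : ℕ}

abbrev Om (N : ℕ) := Fin N → Bool

noncomputable def Ex (f : Om N → ℝ) : ℝ := (∑ ω : Om N, f ω) / 2 ^ N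

lemma card_Om : Fintype.card (Om N) = 2 ^ N := by
  simp [Fintype.card_fun]

def DependsOn (f : Om N → ℝ) (J : Finset ℕ) : Prop :=
  ∀ ω ω' : Om N, (∀ a : Fin N, (a : ℕ) ∈ J → ω a = ω' a) → f ω = f ω'

lemma Ex_const (c : ℝ) : Ex (fun _ : Om N => c) = c := by
  simp only [Ex, Finset.sum_const, Finset.card_univ, card_Om, nsmul_eq_mul]
  push_cast
  field_simp

lemma Ex_add (f g : Om N → ℝ) : Ex (fun ω => f ω + g ω) = Ex f + Ex g := by
  simp [Ex, Finset.sum_add_distrib, add_div]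

lemma Ex_mono {f g : Om N → ℝ} (h : ∀ ω, f ω ≤ g ω) : Ex f ≤ Ex g := by
  unfold Ex
  gcongr with ω
  exact h ω

lemma Ex_nonneg {f : Om N → ℝ} (h : ∀ ω, 0 ≤ f ω) : 0 ≤ Ex f := by
  apply div_nonneg _ (by positivity)
  exact Finset.sum_nonneg fun ω _ => h ω

/-- Key independence lemma: two-factor factorization. -/
lemma Ex_mul_of_disjoint {f g : Om N → ℝ} {J K : Finset ℕ}
    (hf : DependsOn f J) (hg : DependsOn g K) (hJK : Disjoint J K) :
    Ex (fun ω => f ω * g ω) = Ex f * Ex g := by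
  classical
  set p : Fin N → Prop := fun a => (a : ℕ) ∈ J with hp
  let e := Equiv.piEquivPiSubtypeProd p (fun _ => Bool)
  set F : ({a : Fin N // p a} → Bool) → ℝ := fun u => f (e.symm (u, fun _ => false)) with hF
  set G : ({a : Fin N // ¬ p a} → Bool) → ℝ := fun v => g (e.symm (fun _ => false, v)) with hG
  have hfe : ∀ u v, f (e.symm (u, v)) = F u := by
    intro u v
    apply hf
    intro a ha
    simp only [e, Equiv.piEquivPiSubtypeProd_symm_apply]
    rw [dif_pos ha, dif_pos ha]
  have hge : ∀ u v, g (e.symm (u, v)) = G v := by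
    intro u v
    apply hg
    intro a ha
    have hnp : ¬ p a := fun hpa => (Finset.disjoint_left.mp hJK) hpa ha
    simp only [e, Equiv.piEquivPiSubtypeProd_symm_apply]
    rw [dif_neg hnp, dif_neg hnp]
  have hsum : ∀ h : Om N → ℝ, ∑ ω : Om N, h ω = ∑ z : _ × _, h (e.symm z) := by
    intro h
    exact (Equiv.sum_comp e.symm h).symm
  have h1 : ∑ ω : Om N, f ω * g ω = (∑ u, F u) * (∑ v, G v) := by
    rw [hsum (fun ω => f ω * g ω)]
    rw [Fintype.sum_prod_type]
    rw [Finset.sum_mul_sum]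
    exact Finset.sum_congr rfl fun u _ => Finset.sum_congr rfl fun v _ => by
      rw [hfe u v, hge u v]
  have h2 : ∑ ω : Om N, f ω = (Fintype.card ({a : Fin N // ¬ p a} → Bool) : ℝ) * ∑ u, F u := by
    rw [hsum f, Fintype.sum_prod_type]
    rw [Finset.sum_congr rfl fun u _ => Finset.sum_congr rfl fun v _ => hfe u v]
    simp only [Finset.sum_const, Finset.card_univ, nsmul_eq_mul, ← Finset.mul_sum]
  have h3 : ∑ ω : Om N, g ω = (Fintype.card ({a : Fin N // p a} → Bool) : ℝ) * ∑ v, G v := by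
    rw [hsum g, Fintype.sum_prod_type]
    rw [Finset.sum_congr rfl fun u _ => Finset.sum_congr rfl fun v _ => hge u v]
    rw [Finset.sum_comm]
    simp only [Finset.sum_const, Finset.card_univ, nsmul_eq_mul, ← Finset.mul_sum]
    rfl
  have hcard : (Fintype.card ({a : Fin N // p a} → Bool)) *
      (Fintype.card ({a : Fin N // ¬ p a} → Bool)) = 2 ^ N := by
    rw [← Fintype.card_prod, ← Fintype.card_congr e, card_Om]
  have hc : ((Fintype.card ({a : Fin N // p a} → Bool)) : ℝ) *
      (Fintype.card ({a : Fin N // ¬ p a} → Bool)) = 2 ^ N := by exact_mod_cast hcard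
  have h2N : ((2:ℝ) ^ N) ≠ 0 := by positivity
  unfold Ex
  rw [h1, h2, h3, div_mul_div_comm]
  rw [show (((Fintype.card ({a : Fin N // ¬ p a} → Bool)) : ℝ) * ∑ u, F u) *
      (((Fintype.card ({a : Fin N // p a} → Bool)) : ℝ) * ∑ v, G v)
      = ((∑ u, F u) * ∑ v, G v) * 2 ^ N from by rw [← hc]; ring]
  rw [div_mul_eq_div_div, mul_div_cancel_right₀ _ h2N]

lemma Ex_mul_const (f : Om N → ℝ) (c : ℝ) : Ex (fun ω => f ω * c) = Ex f * c := by
  simp [Ex, ← Finset.sum_mul]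
  ring

lemma DependsOn.mono {f : Om N → ℝ} {J J' : Finset ℕ} (hJ : J ⊆ J')
    (h : DependsOn f J) : DependsOn f J' :=
  fun ω ω' hh => h ω ω' fun a ha => hh a (hJ ha)

lemma DependsOn.comp {f : Om N → ℝ} {J : Finset ℕ} (h : DependsOn f J) (φ : ℝ → ℝ) :
    DependsOn (fun ω => φ (f ω)) J :=
  fun ω ω' hh => congrArg φ (h ω ω' hh)

lemma DependsOn_prod {ι : Type*} (A : Finset ι) (F : ι → Om N → ℝ) (J : ι → Finset ℕ)
    (h : ∀ i ∈ A, DependsOn (F i) (J i)) :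
    DependsOn (fun ω => ∏ i ∈ A, F i ω) (A.biUnion J) := by
  intro ω ω' hh
  refine Finset.prod_congr rfl fun i hi => ?_
  exact h i hi ω ω' fun a ha => hh a (Finset.mem_biUnion.mpr ⟨i, hi, ha⟩)

lemma Ex_prod {ι : Type*} (A : Finset ι) (F : ι → Om N → ℝ) (J : ι → Finset ℕ)
    (hdep : ∀ i ∈ A, DependsOn (F i) (J i))
    (hdisj : ∀ i ∈ A, ∀ j ∈ A, i ≠ j → Disjoint (J i) (J j)) :
    Ex (fun ω => ∏ i ∈ A, F i ω) = ∏ i ∈ A, Ex (F i) := by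
  classical
  induction A using Finset.induction_on with
  | empty => simp [Ex_const]
  | @insert j A hj ih =>
    have hdisjJ : Disjoint (J j) (A.biUnion J) := by
      rw [Finset.disjoint_biUnion_right]
      intro i hi
      exact hdisj j (Finset.mem_insert_self _ _) i (Finset.mem_insert_of_mem hi)
        (fun h => hj (h ▸ hi))
    have h1 : Ex (fun ω => F j ω * ∏ i ∈ A, F i ω) = Ex (F j) * Ex (fun ω => ∏ i ∈ A, F i ω) :=
      Ex_mul_of_disjoint (hdep j (Finset.mem_insert_self _ _))
        (DependsOn_prod A F J fun i hi => hdep i (Finset.mem_insert_of_mem hi)) hdisjJ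
    rw [show (fun ω => ∏ i ∈ insert j A, F i ω) = fun ω => F j ω * ∏ i ∈ A, F i ω from
      funext fun ω => Finset.prod_insert hj, Finset.prod_insert hj, h1,
      ih (fun i hi => hdep i (Finset.mem_insert_of_mem hi))
        (fun i hi k hk hik => hdisj i (Finset.mem_insert_of_mem hi) k
          (Finset.mem_insert_of_mem hk) hik)]

lemma exp_le_cosh_add {x r : ℝ} (hx : |x| ≤ 1) :
    Real.exp (r * x) ≤ Real.cosh r + x * Real.sinh r := by
  have h1 : -1 ≤ x := neg_le_of_abs_le hx
  have h2 : x ≤ 1 := le_of_abs_le hx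
  have key := convexOn_exp.2 (Set.mem_univ r) (Set.mem_univ (-r))
    (show (0:ℝ) ≤ (1+x)/2 by linarith) (show (0:ℝ) ≤ (1-x)/2 by linarith)
    (show (1+x)/2 + (1-x)/2 = 1 by ring)
  simp only [smul_eq_mul] at key
  have e1 : (1+x)/2 * r + (1-x)/2 * (-r) = r * x := by ring
  rw [e1] at key
  rw [Real.cosh_eq, Real.sinh_eq]
  calc Real.exp (r * x) ≤ (1+x)/2 * Real.exp r + (1-x)/2 * Real.exp (-r) := key
  _ = (Real.exp r + Real.exp (-r)) / 2 + x * ((Real.exp r - Real.exp (-r)) / 2) := by ring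

lemma mgf_le {f : Om N → ℝ} (hE : Ex f = 0) (hb : ∀ ω, |f ω| ≤ 1) (r : ℝ) :
    Ex (fun ω => Real.exp (r * f ω)) ≤ Real.exp (r ^ 2 / 2) := by
  have step1 : Ex (fun ω => Real.exp (r * f ω))
      ≤ Ex (fun ω => Real.cosh r + f ω * Real.sinh r) :=
    Ex_mono fun ω => exp_le_cosh_add (hb ω)
  have step2 : Ex (fun ω => Real.cosh r + f ω * Real.sinh r) = Real.cosh r := by
    rw [Ex_add (fun _ => Real.cosh r) (fun ω => f ω * Real.sinh r), Ex_const,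
      Ex_mul_const, hE, zero_mul, add_zero]
  calc Ex (fun ω => Real.exp (r * f ω)) ≤ Real.cosh r := step2 ▸ step1
  _ ≤ Real.exp (r ^ 2 / 2) := Real.cosh_le_exp_half_sq r

/-- Chernoff-type counting bound. -/
lemma card_ge_le (T : Om N → ℝ) (t r : ℝ) (hr : 0 ≤ r) :
    ((Finset.univ.filter fun ω : Om N => t ≤ T ω).card : ℝ)
      ≤ Real.exp (-(r * t)) * ∑ ω : Om N, Real.exp (r * T ω) := by
  have h1 : ((Finset.univ.filter fun ω : Om N => t ≤ T ω).card : ℝ) * Real.exp (r * t)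
      ≤ ∑ ω : Om N, Real.exp (r * T ω) := by
    calc ((Finset.univ.filter fun ω : Om N => t ≤ T ω).card : ℝ) * Real.exp (r * t)
        = ∑ _ω ∈ Finset.univ.filter fun ω : Om N => t ≤ T ω, Real.exp (r * t) := by
          rw [Finset.sum_const, nsmul_eq_mul]
      _ ≤ ∑ ω ∈ Finset.univ.filter fun ω : Om N => t ≤ T ω, Real.exp (r * T ω) := by
          refine Finset.sum_le_sum fun ω hω => ?_
          have := (Finset.mem_filter.mp hω).2
          exact Real.exp_le_exp.mpr (by nlinarith)
      _ ≤ ∑ ω : Om N, Real.exp (r * T ω) :=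
          Finset.sum_le_sum_of_subset_of_nonneg (Finset.filter_subset _ _)
            (fun ω _ _ => (Real.exp_pos _).le)
  have h2 : ((Finset.univ.filter fun ω : Om N => t ≤ T ω).card : ℝ)
      ≤ (∑ ω : Om N, Real.exp (r * T ω)) / Real.exp (r * t) :=
    (le_div_iff₀ (Real.exp_pos _)).mpr h1
  rw [Real.exp_neg]
  calc ((Finset.univ.filter fun ω : Om N => t ≤ T ω).card : ℝ)
      ≤ (∑ ω : Om N, Real.exp (r * T ω)) / Real.exp (r * t) := h2
    _ = (Real.exp (r * t))⁻¹ * ∑ ω : Om N, Real.exp (r * T ω) := by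
        rw [div_eq_mul_inv, mul_comm]

/-- Main one-sided tail bound for sums of independent centered bounded variables. -/
lemma tail_bound {ι : Type*} (A : Finset ι) (V : ι → Om N → ℝ) (J : ι → Finset ℕ)
    (hdep : ∀ i ∈ A, DependsOn (V i) (J i))
    (hdisj : ∀ i ∈ A, ∀ j ∈ A, i ≠ j → Disjoint (J i) (J j))
    (hE : ∀ i ∈ A, Ex (V i) = 0) (hb : ∀ i ∈ A, ∀ ω, |V i ω| ≤ 1)
    (t r : ℝ) (hr : 0 ≤ r) :
    ((Finset.univ.filter fun ω : Om N => t ≤ ∑ i ∈ A, V i ω).card : ℝ)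
      ≤ 2 ^ N * Real.exp (r ^ 2 * A.card / 2 - r * t) := by
  classical
  have hmgf : Ex (fun ω => Real.exp (r * ∑ i ∈ A, V i ω))
      ≤ Real.exp (r ^ 2 * A.card / 2) := by
    have hexpand : (fun ω => Real.exp (r * ∑ i ∈ A, V i ω))
        = fun ω => ∏ i ∈ A, Real.exp (r * V i ω) := by
      funext ω
      rw [Finset.mul_sum, Real.exp_sum]
    rw [hexpand, Ex_prod A (fun i ω => Real.exp (r * V i ω)) J
      (fun i hi => (hdep i hi).comp (fun y => Real.exp (r * y))) hdisj]
    calc ∏ i ∈ A, Ex (fun ω => Real.exp (r * V i ω))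
        ≤ ∏ _i ∈ A, Real.exp (r ^ 2 / 2) := by
          refine Finset.prod_le_prod (fun i _ => Ex_nonneg fun ω => (Real.exp_pos _).le)
            (fun i hi => mgf_le (hE i hi) (hb i hi) r)
      _ = Real.exp (r ^ 2 * A.card / 2) := by
          rw [Finset.prod_const, ← Real.exp_nat_mul]
          ring_nf
  have h1 := card_ge_le (fun ω => ∑ i ∈ A, V i ω) t r hr
  have h2 : ∑ ω : Om N, Real.exp (r * ∑ i ∈ A, V i ω)
      = 2 ^ N * Ex (fun ω => Real.exp (r * ∑ i ∈ A, V i ω)) := by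
    rw [Ex, mul_div_cancel₀]
    positivity
  calc ((Finset.univ.filter fun ω : Om N => t ≤ ∑ i ∈ A, V i ω).card : ℝ)
      ≤ Real.exp (-(r * t)) * (2 ^ N * Ex (fun ω => Real.exp (r * ∑ i ∈ A, V i ω))) := by
        rw [← h2]; exact h1
    _ ≤ Real.exp (-(r * t)) * (2 ^ N * Real.exp (r ^ 2 * A.card / 2)) := by
        exact mul_le_mul_of_nonneg_left
          (mul_le_mul_of_nonneg_left hmgf (by positivity)) (Real.exp_pos _).le
    _ = 2 ^ N * Real.exp (r ^ 2 * A.card / 2 - r * t) := by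
        rw [sub_eq_add_neg, Real.exp_add]
        ring

/-! ### Indicator variables -/

noncomputable def xv (ω : Om N) (a : ℕ) : ℝ :=
  if h : a < N then (if ω ⟨a, h⟩ then 1 else 0) else 0

lemma xv_nonneg (ω : Om N) (a : ℕ) : 0 ≤ xv ω a := by
  unfold xv; split_ifs <;> norm_num

lemma xv_le_one (ω : Om N) (a : ℕ) : xv ω a ≤ 1 := by
  unfold xv; split_ifs <;> norm_num

lemma xv_eq_zero (ω : Om N) {a : ℕ} (h : N ≤ a) : xv ω a = 0 := by
  unfold xv; rw [dif_neg (by omega)]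

lemma xv_mul_self (ω : Om N) (a : ℕ) : xv ω a * xv ω a = xv ω a := by
  unfold xv; split_ifs <;> norm_num

lemma xv_dep (a : ℕ) : DependsOn (N := N) (fun ω => xv ω a) {a} := by
  intro ω ω' hh
  show xv ω a = xv ω' a
  unfold xv
  by_cases h : a < N
  · rw [dif_pos h, dif_pos h, hh ⟨a, h⟩ (by simp)]
  · rw [dif_neg h, dif_neg h]

lemma Ex_xv {a : ℕ} (h : a < N) : Ex (fun ω : Om N => xv ω a) = 1 / 2 := by
  classical
  set i : Fin N := ⟨a, h⟩ with hi
  let e := Equiv.funSplitAt i Bool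
  have hcard : (Fintype.card ({ j : Fin N // j ≠ i } → Bool)) = 2 ^ (N - 1) := by
    rw [Fintype.card_fun, Fintype.card_bool]
    congr 1
    have := Fintype.card_subtype_compl (fun j : Fin N => j = i)
    simp only [Fintype.card_subtype_eq, Fintype.card_fin] at this
    exact this
  have hx : ∀ z : Bool × ({ j : Fin N // j ≠ i } → Bool), xv (e.symm z) a
      = if z.1 then 1 else 0 := by
    intro z
    unfold xv
    rw [dif_pos h]
    congr 1
    show ((e.symm z) i = true) = (z.1 = true)
    simp [e]
  have hv : ∑ ω : Om N, xv ω a = 2 ^ (N - 1) := by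
    rw [← Equiv.sum_comp e.symm (fun ω => xv ω a)]
    rw [Fintype.sum_prod_type]
    rw [Finset.sum_congr rfl fun x (_ : x ∈ Finset.univ) =>
      Finset.sum_congr rfl fun y (_ : y ∈ Finset.univ) => hx (x, y)]
    rw [Fintype.sum_bool]
    simp [hcard]
  unfold Ex
  rw [hv]
  have hN : N = (N - 1) + 1 := by omega
  rw [hN, pow_succ]
  have hpos : ((2:ℝ)) ^ (N-1) > 0 := by positivity
  rw [show N - 1 + 1 - 1 = N - 1 from by omega]
  field_simp

lemma Ex_xv_mul {a b : ℕ} (ha : a < N) (hb : b < N) (hab : a ≠ b) :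
    Ex (fun ω : Om N => xv ω a * xv ω b) = 1 / 4 := by
  rw [Ex_mul_of_disjoint (J := {a}) (K := {b}) (xv_dep a) (xv_dep b)
    (by simpa using hab), Ex_xv ha, Ex_xv hb]
  norm_num

lemma DependsOn.mul {f g : Om N → ℝ} {J : Finset ℕ} (hf : DependsOn f J)
    (hg : DependsOn g J) : DependsOn (fun ω => f ω * g ω) J :=
  fun ω ω' hh => by
    show f ω * g ω = f ω' * g ω'
    rw [show f ω = f ω' from hf ω ω' hh, show g ω = g ω' from hg ω ω' hh]

lemma Ex_neg (f : Om N → ℝ) : Ex (fun ω => -f ω) = -Ex f := by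
  simp [Ex, Finset.sum_neg_distrib, neg_div]

/-! ### The pair sums -/

noncomputable def Pn (N n : ℕ) : Finset (ℕ × ℕ) :=
  (Finset.HasAntidiagonal.antidiagonal n).filter (fun p => p.1 < p.2 ∧ p.2 < N)

noncomputable def Kn (N n : ℕ) : ℕ := (Pn N n).card

noncomputable def Sn (N n : ℕ) (ω : Om N) : ℝ := ∑ p ∈ Pn N n, xv ω p.1 * xv ω p.2

noncomputable def Rw (N n : ℕ) (ω : Om N) : ℝ :=
  ∑ p ∈ Finset.HasAntidiagonal.antidiagonal n, xv ω p.1 * xv ω p.2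

noncomputable def Dg (N n : ℕ) (ω : Om N) : ℝ := if n % 2 = 0 then xv ω (n / 2) else 0

lemma mem_Pn {p : ℕ × ℕ} {n : ℕ} :
    p ∈ Pn N n ↔ p.1 + p.2 = n ∧ p.1 < p.2 ∧ p.2 < N := by
  simp [Pn, Finset.HasAntidiagonal.mem_antidiagonal, and_assoc]

lemma R_decomp (n : ℕ) (ω : Om N) : Rw N n ω = 2 * Sn N n ω + Dg N n ω := by
  classical
  set f : ℕ × ℕ → ℝ := fun p => xv ω p.1 * xv ω p.2 with hf
  have h0 : Rw N n ω = ∑ p ∈ (Finset.HasAntidiagonal.antidiagonal n).filter (fun p => p.1 < p.2), f p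
      + ∑ p ∈ (Finset.HasAntidiagonal.antidiagonal n).filter (fun p => ¬ p.1 < p.2), f p :=
    (Finset.sum_filter_add_sum_filter_not _ _ _).symm
  have h1 : ∑ p ∈ (Finset.HasAntidiagonal.antidiagonal n).filter (fun p => ¬ p.1 < p.2), f p
      = ∑ p ∈ (Finset.HasAntidiagonal.antidiagonal n).filter (fun p => p.2 < p.1), f p
      + ∑ p ∈ (Finset.HasAntidiagonal.antidiagonal n).filter (fun p => p.1 = p.2), f p := by
    rw [← Finset.sum_filter_add_sum_filter_not
      ((Finset.HasAntidiagonal.antidiagonal n).filter (fun p => ¬ p.1 < p.2)) (fun p => p.2 < p.1) f]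
    congr 1
    · congr 1
      rw [Finset.filter_filter]
      apply Finset.filter_congr
      intro p _
      constructor
      · omega
      · omega
    · congr 1
      rw [Finset.filter_filter]
      apply Finset.filter_congr
      intro p _
      constructor
      · omega
      · omega
  have h2 : ∑ p ∈ (Finset.HasAntidiagonal.antidiagonal n).filter (fun p => p.2 < p.1), f p
      = ∑ p ∈ (Finset.HasAntidiagonal.antidiagonal n).filter (fun p => p.1 < p.2), f p := by
    apply Finset.sum_nbij' (i := Prod.swap) (j := Prod.swap)
    · intro p hp
      obtain ⟨a, b⟩ := p
      simp only [Finset.mem_filter, Finset.HasAntidiagonal.mem_antidiagonal, Prod.swap_prod_mk] at hp ⊢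
      omega
    · intro p hp
      obtain ⟨a, b⟩ := p
      simp only [Finset.mem_filter, Finset.HasAntidiagonal.mem_antidiagonal, Prod.swap_prod_mk] at hp ⊢
      omega
    · intro p _; exact Prod.swap_swap p
    · intro p _; exact Prod.swap_swap p
    · intro p _
      obtain ⟨a, b⟩ := p
      simp [f, mul_comm]
  have h3 : ∑ p ∈ (Finset.HasAntidiagonal.antidiagonal n).filter (fun p => p.1 < p.2), f p = Sn N n ω := by
    rw [Sn, ← hf]
    apply (Finset.sum_subset ?_ ?_).symm
    · intro p hp
      rw [mem_Pn] at hp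
      simp only [Finset.mem_filter, Finset.HasAntidiagonal.mem_antidiagonal]
      exact ⟨hp.1, hp.2.1⟩
    · intro p hp hnp
      simp only [Finset.mem_filter, Finset.HasAntidiagonal.mem_antidiagonal] at hp
      rw [mem_Pn] at hnp
      have : N ≤ p.2 := by
        by_contra hc
        exact hnp ⟨hp.1, hp.2, by omega⟩
      simp [f, xv_eq_zero ω this]
  have h4 : ∑ p ∈ (Finset.HasAntidiagonal.antidiagonal n).filter (fun p => p.1 = p.2), f p = Dg N n ω := by
    by_cases hpar : n % 2 = 0
    · have : (Finset.HasAntidiagonal.antidiagonal n).filter (fun p => p.1 = p.2) = {(n/2, n/2)} := by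
        ext p
        simp only [Finset.mem_filter, Finset.HasAntidiagonal.mem_antidiagonal, Finset.mem_singleton,
          Prod.ext_iff]
        omega
      rw [this, Finset.sum_singleton, Dg, if_pos hpar]
      exact xv_mul_self ω (n/2)
    · have : (Finset.HasAntidiagonal.antidiagonal n).filter (fun p => p.1 = p.2) = ∅ := by
        ext p
        simp only [Finset.mem_filter, Finset.HasAntidiagonal.mem_antidiagonal, Finset.notMem_empty,
          iff_false, not_and]
        omega
      rw [this, Finset.sum_empty, Dg, if_neg hpar]
  rw [h0, h1, h2, h3, h4]
  ring

lemma Kn_eq (n : ℕ) (hN : 1 ≤ N) : Kn N n = min n (N - 1) - n / 2 := by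
  classical
  rw [Kn, ← Nat.card_Ioc]
  apply Finset.card_bij (fun p _ => p.2)
  · intro p hp
    rw [mem_Pn] at hp
    rw [Finset.mem_Ioc]
    omega
  · intro p hp q hq hpq
    rw [mem_Pn] at hp hq
    have : p.1 = q.1 := by omega
    exact Prod.ext this hpq
  · intro b hb
    rw [Finset.mem_Ioc] at hb
    refine ⟨(n - b, b), ?_, rfl⟩
    rw [mem_Pn]
    omega

lemma Kn_le (n : ℕ) : Kn N n ≤ N := by
  classical
  have h : Kn N n ≤ (Finset.range N).card := by
    apply Finset.card_le_card_of_injOn (fun p => p.2)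
    · intro p hp
      rw [Finset.mem_coe, mem_Pn] at hp
      rw [Finset.mem_coe, Finset.mem_range]
      exact hp.2.2
    · intro p hp q hq hpq
      rw [Finset.mem_coe, mem_Pn] at hp hq
      have hpq2 : p.2 = q.2 := hpq
      have : p.1 = q.1 := by omega
      exact Prod.ext this hpq2
  simpa using h

lemma Kn_diff (n : ℕ) (hN : 1 ≤ N) (hn : 1 ≤ n) :
    |(Kn N n : ℝ) - Kn N (n - 1)| ≤ 1 := by
  have h1 := Kn_eq (N := N) n hN
  have h2 := Kn_eq (N := N) (n - 1) hN
  have ha : Kn N n ≤ Kn N (n-1) + 1 := by omega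
  have hb : Kn N (n-1) ≤ Kn N n + 1 := by omega
  rw [abs_le]
  constructor
  · have := (Nat.cast_le (α := ℝ)).mpr hb
    push_cast at this ⊢
    linarith
  · have := (Nat.cast_le (α := ℝ)).mpr ha
    push_cast at this ⊢
    linarith

noncomputable def tval (N : ℕ) : ℝ := 2 * Real.sqrt (N * Real.log N)

lemma tval_nonneg : 0 ≤ tval N := by
  unfold tval; positivity

lemma tval_sq (hN : 1 ≤ N) : tval N ^ 2 = 4 * ((N : ℝ) * Real.log N) := by
  have hz : (0:ℝ) ≤ (N : ℝ) * Real.log N := by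
    apply mul_nonneg (by positivity)
    exact Real.log_nonneg (by exact_mod_cast hN)
  rw [tval, mul_pow, Real.sq_sqrt hz]
  norm_num

lemma Sn_sub_eq (n : ℕ) (ω : Om N) :
    Sn N n ω - Kn N n / 4 = ∑ p ∈ Pn N n, (xv ω p.1 * xv ω p.2 - 1/4) := by
  rw [Finset.sum_sub_distrib, Finset.sum_const, nsmul_eq_mul, Sn, Kn]
  ring

lemma Pn_pair_disjoint {n : ℕ} {p q : ℕ × ℕ} (hp : p ∈ Pn N n) (hq : q ∈ Pn N n)
    (hpq : p ≠ q) : Disjoint ({p.1, p.2} : Finset ℕ) ({q.1, q.2} : Finset ℕ) := by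
  rw [mem_Pn] at hp hq
  have hne : p.1 ≠ q.1 := by
    intro h
    exact hpq (Prod.ext h (by omega))
  rw [Finset.disjoint_left]
  intro a ha hb
  simp only [Finset.mem_insert, Finset.mem_singleton] at ha hb
  omega

lemma badn_card (hN : 12 ≤ N) (n : ℕ) :
    ((Finset.univ.filter fun ω : Om N =>
        tval N ≤ |Sn N n ω - Kn N n / 4|).card : ℝ) ≤ 2 ^ N * (2 / (N : ℝ) ^ 2) := by
  classical
  set t := tval N with htdef
  have ht : 0 ≤ t := tval_nonneg
  have hNpos : (0:ℝ) < N := by positivity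
  set r : ℝ := t / N with hrdef
  have hr : 0 ≤ r := div_nonneg ht hNpos.le
  set V : ℕ × ℕ → Om N → ℝ := fun p ω => xv ω p.1 * xv ω p.2 - 1/4 with hV
  set A := Pn N n with hA
  have hdep : ∀ p ∈ A, DependsOn (V p) ({p.1, p.2} : Finset ℕ) := by
    intro p _
    have h1 : DependsOn (N := N) (fun ω => xv ω p.1) {p.1, p.2} :=
      (xv_dep p.1).mono (by simp)
    have h2 : DependsOn (N := N) (fun ω => xv ω p.2) {p.1, p.2} :=
      (xv_dep p.2).mono (by simp)
    exact (h1.mul h2).comp (fun y => y - 1/4)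
  have hdisj : ∀ p ∈ A, ∀ q ∈ A, p ≠ q →
      Disjoint ({p.1, p.2} : Finset ℕ) ({q.1, q.2} : Finset ℕ) :=
    fun p hp q hq hpq => Pn_pair_disjoint hp hq hpq
  have hE : ∀ p ∈ A, Ex (V p) = 0 := by
    intro p hp
    rw [mem_Pn] at hp
    have : V p = fun ω => (xv ω p.1 * xv ω p.2) + (-(1/4)) := by
      funext ω; simp [hV]; ring
    rw [this, Ex_add (fun ω => xv ω p.1 * xv ω p.2) (fun _ => -(1/4)), Ex_const,
      Ex_xv_mul (by omega) hp.2.2 (by omega)]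
    norm_num
  have hb : ∀ p ∈ A, ∀ ω, |V p ω| ≤ 1 := by
    intro p _ ω
    rw [abs_le]
    have h1 := xv_nonneg ω p.1
    have h2 := xv_nonneg ω p.2
    have h3 := xv_le_one ω p.1
    have h4 := xv_le_one ω p.2
    have h5 : xv ω p.1 * xv ω p.2 ≤ 1 := mul_le_one₀ h3 h2 h4
    have h6 : 0 ≤ xv ω p.1 * xv ω p.2 := mul_nonneg h1 h2
    constructor <;> simp [hV] <;> nlinarith
  have hexp : Real.exp (r ^ 2 * A.card / 2 - r * t) ≤ 1 / (N:ℝ) ^ 2 := by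
    have hKA : (A.card : ℝ) ≤ N := by exact_mod_cast Kn_le (N := N) n
    have hlog : Real.log N ≥ 0 := Real.log_nonneg (by exact_mod_cast (by omega : 1 ≤ N))
    have ht2 : t ^ 2 = 4 * ((N:ℝ) * Real.log N) := tval_sq (by omega)
    have e1 : r ^ 2 * A.card / 2 - r * t ≤ -(2 * Real.log N) := by
      have b1 : r ^ 2 * A.card / 2 ≤ r ^ 2 * N / 2 := by
        have : (0:ℝ) ≤ r ^ 2 := sq_nonneg r
        nlinarith
      have b2 : r ^ 2 * N / 2 - r * t = -(t ^ 2 / (2 * N)) := by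
        rw [hrdef]
        field_simp
        ring
      have b3 : t ^ 2 / (2 * N) = 2 * Real.log N := by
        rw [ht2]
        field_simp
        ring
      linarith [b1, b2.symm.le, b3]
    calc Real.exp (r ^ 2 * A.card / 2 - r * t) ≤ Real.exp (-(2 * Real.log N)) :=
          Real.exp_le_exp.mpr e1
      _ = 1 / (N:ℝ) ^ 2 := by
          rw [Real.exp_neg, show (2:ℝ) * Real.log N = Real.log ((N:ℝ) ^ 2) from by
            rw [Real.log_pow]; norm_num,
            Real.exp_log (by positivity)]
          rw [one_div]
  have hplus := tail_bound A V (fun p => ({p.1, p.2} : Finset ℕ)) hdep hdisj hE hb t r hr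
  have hminus := tail_bound A (fun p ω => -(V p ω)) (fun p => ({p.1, p.2} : Finset ℕ))
    (fun p hp => (hdep p hp).comp (fun y => -y)) hdisj
    (fun p hp => by rw [Ex_neg (V p), hE p hp, neg_zero])
    (fun p hp ω => by rw [abs_neg]; exact hb p hp ω) t r hr
  have hsub : (Finset.univ.filter fun ω : Om N => t ≤ |Sn N n ω - Kn N n / 4|)
      ⊆ (Finset.univ.filter fun ω : Om N => t ≤ ∑ p ∈ A, V p ω)
        ∪ (Finset.univ.filter fun ω : Om N => t ≤ ∑ p ∈ A, -(V p ω)) := by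
    intro ω hω
    rw [Finset.mem_filter] at hω
    have habs : t ≤ |∑ p ∈ A, V p ω| := by
      rw [← Sn_sub_eq]
      exact hω.2
    rw [Finset.mem_union, Finset.mem_filter, Finset.mem_filter]
    rcases le_abs.mp habs with h | h
    · exact Or.inl ⟨Finset.mem_univ ω, h⟩
    · refine Or.inr ⟨Finset.mem_univ ω, ?_⟩
      rw [Finset.sum_neg_distrib]
      exact h
  have hcards : ((Finset.univ.filter fun ω : Om N =>
      t ≤ |Sn N n ω - Kn N n / 4|).card : ℝ)
      ≤ ((Finset.univ.filter fun ω : Om N => t ≤ ∑ p ∈ A, V p ω).card : ℝ)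
        + ((Finset.univ.filter fun ω : Om N => t ≤ ∑ p ∈ A, -(V p ω)).card : ℝ) := by
    have h1 := Finset.card_le_card hsub
    have h2 := Finset.card_union_le
      (Finset.univ.filter fun ω : Om N => t ≤ ∑ p ∈ A, V p ω)
      (Finset.univ.filter fun ω : Om N => t ≤ ∑ p ∈ A, -(V p ω))
    exact_mod_cast le_trans h1 h2
  have h2pow : (0:ℝ) ≤ 2 ^ N := by positivity
  calc ((Finset.univ.filter fun ω : Om N =>
      t ≤ |Sn N n ω - Kn N n / 4|).card : ℝ)
      ≤ 2 ^ N * Real.exp (r ^ 2 * A.card / 2 - r * t)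
        + 2 ^ N * Real.exp (r ^ 2 * A.card / 2 - r * t) := by
        refine le_trans hcards (add_le_add hplus hminus)
    _ ≤ 2 ^ N * (1 / (N:ℝ) ^ 2) + 2 ^ N * (1 / (N:ℝ) ^ 2) :=
        add_le_add (mul_le_mul_of_nonneg_left hexp h2pow)
          (mul_le_mul_of_nonneg_left hexp h2pow)
    _ = 2 ^ N * (2 / (N : ℝ) ^ 2) := by ring

/-! ### The B-side -/

noncomputable def bx (ω : Om N) (a : ℕ) : ℤ :=
  if h : a < N then (if ω ⟨a, h⟩ then 1 else 0) else 0

noncomputable def Zk (N d : ℕ) (lam : ℕ → ℤ) (k : ℕ) (ω : Om N) : ℝ :=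
  if (∑ i ∈ Finset.range (d+1), lam i * bx ω (k*(d+1)+d-i)) = 0 then 0 else 1

lemma Zk_nonneg (lam : ℕ → ℤ) (d k : ℕ) (ω : Om N) : 0 ≤ Zk N d lam k ω := by
  unfold Zk; split_ifs <;> norm_num

lemma Zk_le_one (lam : ℕ → ℤ) (d k : ℕ) (ω : Om N) : Zk N d lam k ω ≤ 1 := by
  unfold Zk; split_ifs <;> norm_num

lemma Zk_dep (lam : ℕ → ℤ) (d k : ℕ) :
    DependsOn (Zk N d lam k) (Finset.Icc (k*(d+1)) (k*(d+1)+d)) := by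
  intro ω ω' hh
  show Zk N d lam k ω = Zk N d lam k ω'
  have hsum : ∑ i ∈ Finset.range (d+1), lam i * bx ω (k*(d+1)+d-i)
      = ∑ i ∈ Finset.range (d+1), lam i * bx ω' (k*(d+1)+d-i) := by
    refine Finset.sum_congr rfl fun i hi => ?_
    rw [Finset.mem_range] at hi
    congr 1
    unfold bx
    by_cases h : k*(d+1)+d-i < N
    · rw [dif_pos h, dif_pos h, hh ⟨k*(d+1)+d-i, h⟩ (by rw [Finset.mem_Icc]; simp; omega)]
    · rw [dif_neg h, dif_neg h]
  unfold Zk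
  rw [hsum]

lemma block_disj (d : ℕ) {k k' : ℕ} (h : k ≠ k') :
    Disjoint (Finset.Icc (k*(d+1)) (k*(d+1)+d)) (Finset.Icc (k'*(d+1)) (k'*(d+1)+d)) := by
  rw [Finset.disjoint_left]
  intro a ha hb
  rw [Finset.mem_Icc] at ha hb
  rcases Nat.lt_or_ge k k' with hlt | hge
  · have h1 : (k+1)*(d+1) ≤ k'*(d+1) := Nat.mul_le_mul_right (d+1) hlt
    have h2 : (k+1)*(d+1) = k*(d+1)+d+1 := by ring
    omega
  · have hlt' : k' < k := by omega
    have h1 : (k'+1)*(d+1) ≤ k*(d+1) := Nat.mul_le_mul_right (d+1) hlt'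
    have h2 : (k'+1)*(d+1) = k'*(d+1)+d+1 := by ring
    omega

lemma card_prescribed (s : Finset (Fin N)) (pat : Fin N → Bool) :
    2 ^ (N - s.card) ≤ (Finset.univ.filter fun ω : Om N => ∀ a ∈ s, ω a = pat a).card := by
  classical
  have hmaps : ∀ v : {a : Fin N // a ∉ s} → Bool,
      (fun a => if h : a ∈ s then pat a else v ⟨a, h⟩ : Om N)
        ∈ Finset.univ.filter fun ω : Om N => ∀ a ∈ s, ω a = pat a := by
    intro v
    rw [Finset.mem_filter]
    exact ⟨Finset.mem_univ _, fun a ha => dif_pos ha⟩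
  have hinj : Set.InjOn (fun (v : {a : Fin N // a ∉ s} → Bool) =>
      (fun a => if h : a ∈ s then pat a else v ⟨a, h⟩ : Om N))
      ↑(Finset.univ : Finset ({a : Fin N // a ∉ s} → Bool)) := by
    intro v _ v' _ hvv
    funext b
    have h2 := congrFun hvv b.1
    simp only [dif_neg b.2] at h2
    exact h2
  have hle := Finset.card_le_card_of_injOn _ (fun v _ => hmaps v) hinj
  rw [Finset.card_univ, Fintype.card_fun, Fintype.card_bool] at hle
  have hcard : Fintype.card {a : Fin N // a ∉ s} = N - s.card := by
    have := Fintype.card_subtype_compl (fun a : Fin N => a ∈ s)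
    simp only [Fintype.card_fin, Fintype.card_coe] at this
    exact this
  rwa [hcard] at hle

lemma Ex_Zk_ge (lam : ℕ → ℤ) (d k M : ℕ) (hN : N = M*(d+1)) (hk : k < M)
    {i0 : ℕ} (hi0 : i0 ≤ d) (hlam : lam i0 ≠ 0) :
    ((1:ℝ)/2) ^ (d+1) ≤ Ex (Zk N d lam k) := by
  classical
  have hblockN : k*(d+1)+d < N := by
    rw [hN]
    have : (k+1)*(d+1) ≤ M*(d+1) := Nat.mul_le_mul_right (d+1) hk
    have h2 : (k+1)*(d+1) = k*(d+1)+d+1 := by ring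
    omega
  set sF : Finset (Fin N) := Finset.univ.filter
    (fun a : Fin N => k*(d+1) ≤ (a:ℕ) ∧ (a:ℕ) ≤ k*(d+1)+d) with hsF
  have hcard_sF0 : sF.card = (Finset.Icc (k*(d+1)) (k*(d+1)+d)).card := by
    rw [hsF]
    refine Finset.card_bij (fun (a : Fin N) _ => (a:ℕ)) ?_ ?_ ?_
    · intro a ha
      rw [Finset.mem_filter] at ha
      rw [Finset.mem_Icc]
      exact ha.2
    · intro a _ b _ hab
      exact Fin.ext hab
    · intro b hb
      rw [Finset.mem_Icc] at hb
      refine ⟨⟨b, by omega⟩, ?_, rfl⟩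
      rw [Finset.mem_filter]
      exact ⟨Finset.mem_univ _, by simpa using hb⟩
  have hcard_sF : sF.card = d + 1 := by
    rw [Nat.card_Icc] at hcard_sF0
    omega
  set pat : Fin N → Bool := fun a => decide ((a:ℕ) = k*(d+1)+d-i0) with hpat
  have hZ1 : ∀ ω : Om N, (∀ a ∈ sF, ω a = pat a) → Zk N d lam k ω = 1 := by
    intro ω hω
    have hbx : ∀ i, i < d+1 → bx ω (k*(d+1)+d-i) = if i = i0 then 1 else 0 := by
      intro i hi
      have hidx : k*(d+1)+d-i < N := by omega
      have hmem : (⟨k*(d+1)+d-i, hidx⟩ : Fin N) ∈ sF := by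
        rw [hsF, Finset.mem_filter]
        refine ⟨Finset.mem_univ _, by simp; omega⟩
      have := hω _ hmem
      rw [hpat] at this
      unfold bx
      rw [dif_pos hidx, this]
      by_cases hii : i = i0
      · rw [if_pos hii]
        simp only [decide_eq_true_eq]
        rw [if_pos (by omega)]
      · rw [if_neg hii]
        simp only [decide_eq_true_eq]
        rw [if_neg (by omega)]
    have hsum : ∑ i ∈ Finset.range (d+1), lam i * bx ω (k*(d+1)+d-i) = lam i0 := by
      rw [Finset.sum_congr rfl (fun i hi => by
        rw [hbx i (Finset.mem_range.mp hi)])]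
      rw [Finset.sum_eq_single i0]
      · rw [if_pos rfl, mul_one]
      · intro b _ hb
        rw [if_neg hb, mul_zero]
      · intro hb
        exact absurd (Finset.mem_range.mpr (by omega)) hb
    unfold Zk
    rw [hsum, if_neg hlam]
  have hsum_ge : (2:ℝ) ^ (N - (d+1)) ≤ ∑ ω : Om N, Zk N d lam k ω := by
    have hsub : (Finset.univ.filter fun ω : Om N => ∀ a ∈ sF, ω a = pat a) ⊆ Finset.univ :=
      Finset.filter_subset _ _
    calc (2:ℝ) ^ (N - (d+1))
        ≤ ((Finset.univ.filter fun ω : Om N => ∀ a ∈ sF, ω a = pat a).card : ℝ) := by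
          exact_mod_cast hcard_sF ▸ card_prescribed sF pat
      _ = ∑ ω ∈ Finset.univ.filter (fun ω : Om N => ∀ a ∈ sF, ω a = pat a),
            Zk N d lam k ω := by
          rw [Finset.sum_congr rfl (fun ω hω => hZ1 ω (Finset.mem_filter.mp hω).2)]
          rw [Finset.sum_const, nsmul_eq_mul, mul_one]
      _ ≤ ∑ ω : Om N, Zk N d lam k ω :=
          Finset.sum_le_sum_of_subset_of_nonneg hsub
            (fun ω _ _ => Zk_nonneg lam d k ω)
  have hdN : d + 1 ≤ N := by
    rw [hN]
    have : 1*(d+1) ≤ M*(d+1) := Nat.mul_le_mul_right (d+1) (by omega)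
    omega
  rw [Ex, le_div_iff₀ (by positivity)]
  calc ((1:ℝ)/2) ^ (d+1) * 2 ^ N = 2 ^ (N - (d+1)) := by
        have h2 : (2:ℝ)^N = 2^(N-(d+1)) * 2^(d+1) := by
          rw [← pow_add]; congr 1; omega
        rw [h2, div_pow, one_pow]
        field_simp
    _ ≤ ∑ ω : Om N, Zk N d lam k ω := hsum_ge

/-! ### Translation to the set-level definitions -/

def Cset (N : ℕ) (ω : Om N) : Set ℕ := {a | ∃ h : a < N, ω ⟨a, h⟩ = true}

lemma Cset_subset (ω : Om N) : Cset N ω ⊆ Set.Icc 0 (N - 1) := by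
  intro a ha
  obtain ⟨h, _⟩ := ha
  exact ⟨Nat.zero_le a, by omega⟩

lemma xv_indicator (ω : Om N) (a : ℕ) :
    xv ω a = if a ∈ Cset N ω then 1 else 0 := by
  unfold xv
  by_cases h : a < N
  · rw [dif_pos h]
    by_cases hw : ω ⟨a, h⟩ = true
    · rw [if_pos hw, if_pos ⟨h, hw⟩]
    · rw [if_neg hw, if_neg (fun hmem => ?_)]
      obtain ⟨h', hw'⟩ := hmem
      exact hw hw'
  · rw [dif_neg h, if_neg (fun hmem => ?_)]
    obtain ⟨h', _⟩ := hmem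
    exact h h'

lemma chi_Cset (ω : Om N) (m i : ℕ) (him : i ≤ m) :
    chi (Cset N ω) ((m : ℤ) - i) = bx ω (m - i) := by
  have h0 : (0:ℤ) ≤ (m:ℤ) - i := by omega
  have htn : ((m:ℤ) - i).toNat = m - i := by omega
  unfold chi bx
  by_cases h : m - i < N
  · rw [dif_pos h]
    by_cases hw : ω ⟨m - i, h⟩ = true
    · rw [if_pos ⟨h0, htn ▸ ⟨h, hw⟩⟩, if_pos hw]
    · rw [if_neg hw, if_neg]
      rintro ⟨-, hmem⟩
      rw [htn] at hmem
      obtain ⟨h', hw'⟩ := hmem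
      exact hw hw'
  · rw [dif_neg h, if_neg]
    rintro ⟨-, hmem⟩
    rw [htn] at hmem
    obtain ⟨h', -⟩ := hmem
    exact h h'

lemma Rf_eq (ω : Om N) (n : ℕ) : (Rf (Cset N ω) n : ℝ) = Rw N n ω := by
  classical
  have hset : {p : ℕ × ℕ | p.1 ∈ Cset N ω ∧ p.2 ∈ Cset N ω ∧ p.1 + p.2 = n}
      = ↑((Finset.HasAntidiagonal.antidiagonal n).filter
          (fun p => p.1 ∈ Cset N ω ∧ p.2 ∈ Cset N ω)) := by
    ext p
    simp only [Set.mem_setOf_eq, Finset.coe_filter, Finset.HasAntidiagonal.mem_antidiagonal,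
      Set.mem_setOf_eq]
    tauto
  rw [Rf, hset, Nat.card_coe_set_eq, Set.ncard_coe_finset]
  rw [Finset.card_filter]
  rw [Rw]
  push_cast
  refine Finset.sum_congr rfl fun p _ => ?_
  rw [xv_indicator, xv_indicator]
  by_cases h1 : p.1 ∈ Cset N ω <;> by_cases h2 : p.2 ∈ Cset N ω <;>
    simp [h1, h2]

lemma Bf_eq_card (C : Set ℕ) (lam : ℕ → ℤ) (d n : ℕ) :
    Bf C lam d n = ((Finset.range (n+1)).filter
      (fun m : ℕ => ∑ i ∈ Finset.range (d+1), lam i * chi C ((m : ℤ) - i) ≠ 0)).card := by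
  classical
  have hset : {m : ℕ | m ≤ n ∧ ∑ i ∈ Finset.range (d+1), lam i * chi C ((m : ℤ) - i) ≠ 0}
      = (((Finset.range (n+1)).filter
        (fun m : ℕ => ∑ i ∈ Finset.range (d+1), lam i * chi C ((m : ℤ) - i) ≠ 0)) : Set ℕ) := by
    ext m
    simp only [Set.mem_setOf_eq, Finset.coe_filter, Finset.mem_range, Nat.lt_succ_iff,
      Set.mem_setOf_eq]
  rw [Bf, hset, Nat.card_coe_set_eq, Set.ncard_coe_finset]

lemma Dg_nonneg (n : ℕ) (ω : Om N) : 0 ≤ Dg N n ω := by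
  unfold Dg; split_ifs
  · exact xv_nonneg ω _
  · norm_num
lemma Dg_le_one (n : ℕ) (ω : Om N) : Dg N n ω ≤ 1 := by
  unfold Dg; split_ifs
  · exact xv_le_one ω _
  · norm_num

lemma Rw_eq_zero {n : ℕ} (ω : Om N) (h : 2 * N - 1 ≤ n) (hN : 1 ≤ N) : Rw N n ω = 0 := by
  rw [Rw]
  apply Finset.sum_eq_zero
  intro p hp
  rw [Finset.HasAntidiagonal.mem_antidiagonal] at hp
  rcases Nat.lt_or_ge p.1 N with h1 | h1
  · have h2 : N ≤ p.2 := by omega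
    rw [xv_eq_zero ω h2, mul_zero]
  · rw [xv_eq_zero ω h1, zero_mul]

lemma sum_Zk_eq (lam : ℕ → ℤ) (d M : ℕ) (ω : Om N) :
    ∑ k ∈ Finset.range M, Zk N d lam k ω
      = (((Finset.range M).filter (fun k =>
          (∑ i ∈ Finset.range (d+1), lam i * bx ω (k*(d+1)+d-i)) ≠ 0)).card : ℝ) := by
  classical
  rw [Finset.card_filter]
  push_cast
  refine Finset.sum_congr rfl fun k _ => ?_
  unfold Zk
  by_cases h : (∑ i ∈ Finset.range (d+1), lam i * bx ω (k*(d+1)+d-i)) = 0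
  · rw [if_pos h, if_neg (by simpa using h)]
  · rw [if_neg h, if_pos h]

lemma half_le_log_two : (1/2 : ℝ) ≤ Real.log 2 := by
  rw [show (1/2 : ℝ) = Real.log (Real.exp (1/2)) from (Real.log_exp _).symm]
  apply Real.log_le_log (Real.exp_pos _)
  have hmul : Real.exp (1/2) * Real.exp (1/2) = Real.exp 1 := by
    rw [← Real.exp_add]; norm_num
  nlinarith [Real.exp_one_lt_d9, Real.exp_pos (1/2 : ℝ)]

lemma one_le_sqrt_NlogN (hN : 12 ≤ N) : 1 ≤ Real.sqrt ((N:ℝ) * Real.log N) := by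
  have hN2 : (2:ℝ) ≤ N := by
    have : (12:ℝ) ≤ N := by exact_mod_cast hN
    linarith
  have hlog : (1/2 : ℝ) ≤ Real.log N :=
    le_trans half_le_log_two (Real.log_le_log (by norm_num) hN2)
  have : (1:ℝ) ≤ (N:ℝ) * Real.log N := by nlinarith
  exact Real.one_le_sqrt.mpr this

lemma exp_neg_two_le : Real.exp (-2) ≤ 1/4 := by
  have h1 : (2:ℝ) ≤ Real.exp 1 := by
    have := Real.add_one_le_exp (1:ℝ)
    linarith
  have h2 : (4:ℝ) ≤ Real.exp 2 := by
    have : Real.exp 2 = Real.exp 1 * Real.exp 1 := by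
      rw [← Real.exp_add]; norm_num
    nlinarith
  rw [Real.exp_neg]
  rw [show (1/4 : ℝ) = 4⁻¹ from by norm_num]
  exact inv_anti₀ (by norm_num) h2

lemma good_R_bound (hN : 12 ≤ N) (ω : Om N)
    (hgood : ∀ n ∈ Finset.range (2*N+1),
      |Sn N n ω - Kn N n / 4| < tval N) (n : ℕ) :
    |(Rf (Cset N ω) n : ℝ) - (Rz (Cset N ω) ((n:ℤ) - 1) : ℝ)|
      ≤ 12 * Real.sqrt ((N:ℝ) * Real.log N) := by
  have hN1 : 1 ≤ N := by omega
  set B := Real.sqrt ((N:ℝ) * Real.log N) with hB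
  have hB1 : 1 ≤ B := one_le_sqrt_NlogN hN
  have ht2B : tval N = 2 * B := rfl
  rcases Nat.eq_zero_or_pos n with hn0 | hnpos
  · subst hn0
    have hRz0 : Rz (Cset N ω) (((0:ℕ):ℤ) - 1) = 0 := by
      rw [Rz, if_neg (by norm_num)]
    rw [hRz0]
    have hRf : (Rf (Cset N ω) 0 : ℝ) = Rw N 0 ω := Rf_eq ω 0
    have hRw : Rw N 0 ω ≤ 1 := by
      rw [Rw, Finset.Nat.antidiagonal_zero, Finset.sum_singleton]
      calc xv ω 0 * xv ω 0 ≤ 1 * 1 :=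
        mul_le_mul (xv_le_one ω 0) (xv_le_one ω 0) (xv_nonneg ω 0) zero_le_one
      _ = 1 := by norm_num
    have hRw0 : 0 ≤ Rw N 0 ω := by
      rw [Rw]
      exact Finset.sum_nonneg fun p _ => mul_nonneg (xv_nonneg ω _) (xv_nonneg ω _)
    rw [hRf]
    push_cast
    rw [abs_le]
    constructor <;> nlinarith
  · have hRz : (Rz (Cset N ω) ((n:ℤ) - 1) : ℝ) = (Rf (Cset N ω) (n-1) : ℝ) := by
      rw [Rz, if_pos (by omega)]
      congr 2
      omega
    rw [hRz, Rf_eq, Rf_eq]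
    rcases Nat.lt_or_ge n (2*N+1) with hn2N | hn2N
    · -- main case
      have hg1 := hgood n (Finset.mem_range.mpr hn2N)
      have hg2 := hgood (n-1) (Finset.mem_range.mpr (by omega))
      have hKd := Kn_diff (N := N) n hN1 hnpos
      have hD1a := Dg_nonneg (N := N) n ω
      have hD1b := Dg_le_one (N := N) n ω
      have hD2a := Dg_nonneg (N := N) (n-1) ω
      have hD2b := Dg_le_one (N := N) (n-1) ω
      have e : Rw N n ω - Rw N (n-1) ω
          = 2*(Sn N n ω - Kn N n / 4) - 2*(Sn N (n-1) ω - Kn N (n-1) / 4)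
            + ((Kn N n : ℝ) - (Kn N (n-1) : ℝ))/2 + Dg N n ω - Dg N (n-1) ω := by
        rw [R_decomp, R_decomp]
        ring
      rw [ht2B] at hg1 hg2
      have hga := abs_lt.mp hg1
      have hgb := abs_lt.mp hg2
      have hKd' := abs_le.mp hKd
      rw [abs_le]
      constructor
      · rw [e]
        obtain ⟨hga1, hga2⟩ := hga
        obtain ⟨hgb1, hgb2⟩ := hgb
        obtain ⟨hK1, hK2⟩ := hKd'
        nlinarith
      · rw [e]
        obtain ⟨hga1, hga2⟩ := hga
        obtain ⟨hgb1, hgb2⟩ := hgb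
        obtain ⟨hK1, hK2⟩ := hKd'
        nlinarith
    · -- both vanish
      have h1 : Rw N n ω = 0 := Rw_eq_zero ω (by omega) hN1
      have h2 : Rw N (n-1) ω = 0 := Rw_eq_zero ω (by omega) hN1
      rw [h1, h2]
      simp only [sub_self, abs_zero]
      positivity

end L1

theorem stmt11 (d : ℕ) (lam : ℕ → ℤ)
    (hlam : ∃ i ≤ d, lam i ≠ 0)
    (hsum : ∑ i ∈ Finset.range (d + 1), lam i = 0) :
    ∃ M₀ : ℕ, ∀ M : ℕ, M₀ ≤ M →
      ∃ C : Set ℕ, C ⊆ Set.Icc 0 (M * (d + 1) - 1) ∧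
        (∀ n : ℕ, |(Rf C n : ℝ) - Rz C ((n : ℤ) - 1)|
            ≤ 12 * Real.sqrt ((M * (d + 1) : ℝ) * Real.log (M * (d + 1)))) ∧
        ((M : ℝ) / 2 ^ (d + 2) ≤ (Bf C lam d (M * (d + 1) - 1) : ℝ)) := by
  classical
  obtain ⟨i0, hi0d, hi0⟩ := hlam
  refine ⟨4^(d+3), fun M hM => ?_⟩
  set N := M*(d+1) with hNdef
  have h64 : 64 ≤ 4^(d+3) := by
    calc (64:ℕ) = 4^3 := by norm_num
    _ ≤ 4^(d+3) := Nat.pow_le_pow_right (by norm_num) (by omega)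
  have hM64 : 64 ≤ M := le_trans h64 hM
  have hMN : M ≤ N := by
    rw [hNdef]
    exact Nat.le_mul_of_pos_right M (by omega)
  have hN12 : 12 ≤ N := by omega
  have hN1 : 1 ≤ N := by omega
  set p0 : ℝ := (1/2)^(d+1) with hp0
  have hp0pos : 0 < p0 := by positivity
  have hp0le : p0 ≤ 1 := by
    rw [hp0]
    exact pow_le_one₀ (by norm_num) (by norm_num)
  set bad1 : Finset (L1.Om N) := (Finset.range (2*N+1)).biUnion
      (fun n => Finset.univ.filter
        (fun ω => L1.tval N ≤ |L1.Sn N n ω - L1.Kn N n / 4|)) with hbad1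
  -- bound on bad1
  have hbad1card : (bad1.card : ℝ) ≤ 2^N * (1/2) := by
    have h1 : bad1.card ≤ ∑ n ∈ Finset.range (2*N+1),
        (Finset.univ.filter
          (fun ω : L1.Om N => L1.tval N ≤ |L1.Sn N n ω - L1.Kn N n / 4|)).card :=
      Finset.card_biUnion_le
    have h2 : ((∑ n ∈ Finset.range (2*N+1),
        (Finset.univ.filter
          (fun ω : L1.Om N => L1.tval N ≤ |L1.Sn N n ω - L1.Kn N n / 4|)).card : ℕ) : ℝ)
        ≤ ∑ n ∈ Finset.range (2*N+1), (2:ℝ)^N * (2 / (N:ℝ)^2) := by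
      push_cast
      exact Finset.sum_le_sum fun n _ => L1.badn_card hN12 n
    have h3 : ∑ n ∈ Finset.range (2*N+1), (2:ℝ)^N * (2 / (N:ℝ)^2)
        = (2*N+1 : ℝ) * ((2:ℝ)^N * (2 / (N:ℝ)^2)) := by
      rw [Finset.sum_const, Finset.card_range, nsmul_eq_mul]
      push_cast
      ring
    have hNR : (12:ℝ) ≤ N := by exact_mod_cast hN12
    have h4 : (2*N+1 : ℝ) * ((2:ℝ)^N * (2 / (N:ℝ)^2)) ≤ 2^N * (1/2) := by
      have h2pow : (0:ℝ) < 2^N := by positivity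
      rw [div_eq_mul_inv]
      have hN2pos : (0:ℝ) < (N:ℝ)^2 := by positivity
      have key : (2*(N:ℝ)+1) * 2 * ((N:ℝ)^2)⁻¹ ≤ 1/2 := by
        rw [mul_inv_le_iff₀ hN2pos]
        nlinarith
      calc (2*(N:ℝ)+1) * ((2:ℝ)^N * (2 * ((N:ℝ)^2)⁻¹))
          = 2^N * ((2*(N:ℝ)+1) * 2 * ((N:ℝ)^2)⁻¹) := by ring
        _ ≤ 2^N * (1/2) := mul_le_mul_of_nonneg_left key h2pow.le
    calc (bad1.card : ℝ) ≤ ((∑ n ∈ Finset.range (2*N+1),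
        (Finset.univ.filter
          (fun ω : L1.Om N => L1.tval N ≤ |L1.Sn N n ω - L1.Kn N n / 4|)).card : ℕ) : ℝ) := by
          exact_mod_cast h1
      _ ≤ ∑ n ∈ Finset.range (2*N+1), (2:ℝ)^N * (2 / (N:ℝ)^2) := h2
      _ = (2*N+1 : ℝ) * ((2:ℝ)^N * (2 / (N:ℝ)^2)) := h3
      _ ≤ 2^N * (1/2) := h4
  -- bound on bad2
  have hEx0 : ∀ k, 0 ≤ L1.Ex (L1.Zk N d lam k) :=
    fun k => L1.Ex_nonneg fun ω => L1.Zk_nonneg lam d k ω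
  have hEx1 : ∀ k, L1.Ex (L1.Zk N d lam k) ≤ 1 := by
    intro k
    calc L1.Ex (L1.Zk N d lam k) ≤ L1.Ex (fun _ : L1.Om N => (1:ℝ)) :=
        L1.Ex_mono fun ω => L1.Zk_le_one lam d k ω
      _ = 1 := L1.Ex_const 1
  have htb := L1.tail_bound (Finset.range M)
    (fun k ω => L1.Ex (L1.Zk N d lam k) - L1.Zk N d lam k ω)
    (fun k => Finset.Icc (k*(d+1)) (k*(d+1)+d))
    (fun k _ => (L1.Zk_dep lam d k).comp (fun y => L1.Ex (L1.Zk N d lam k) - y))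
    (fun k _ k' _ hkk => L1.block_disj d hkk)
    (fun k _ => by
      show L1.Ex (fun ω => L1.Ex (L1.Zk N d lam k) - L1.Zk N d lam k ω) = 0
      have : (fun ω => L1.Ex (L1.Zk N d lam k) - L1.Zk N d lam k ω)
          = fun ω => L1.Ex (L1.Zk N d lam k) + (-(L1.Zk N d lam k ω)) := by
        funext ω; ring
      rw [this, L1.Ex_add (fun _ => L1.Ex (L1.Zk N d lam k))
        (fun ω => -(L1.Zk N d lam k ω)), L1.Ex_const, L1.Ex_neg]
      ring)
    (fun k _ ω => by
      show |L1.Ex (L1.Zk N d lam k) - L1.Zk N d lam k ω| ≤ 1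
      rw [abs_le]
      have h1 := hEx0 k
      have h2 := hEx1 k
      have h3 := L1.Zk_nonneg (N := N) lam d k ω
      have h4 := L1.Zk_le_one (N := N) lam d k ω
      constructor <;> linarith)
    ((M:ℝ)*p0/2) (p0/2) (by positivity)
  rw [Finset.card_range] at htb
  have hexp2 : Real.exp ((p0/2)^2 * (M:ℝ) / 2 - (p0/2) * ((M:ℝ)*p0/2)) ≤ 1/4 := by
    have hMp : (16:ℝ) ≤ (M:ℝ) * p0^2 := by
      have hMR : ((4:ℝ))^(d+3) ≤ (M:ℝ) := by
        have := (Nat.cast_le (α := ℝ)).mpr hM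
        push_cast at this
        exact this
      have hkey : (4:ℝ)^(d+3) * p0^2 = 16 := by
        rw [hp0, ← pow_mul]
        rw [show (4:ℝ) = 2^2 from by norm_num, ← pow_mul]
        rw [div_pow, one_pow]
        rw [show 2*(d+3) = ((d+1)*2)+4 from by ring, pow_add]
        field_simp
        norm_num
      calc (16:ℝ) = (4:ℝ)^(d+3) * p0^2 := hkey.symm
        _ ≤ (M:ℝ) * p0^2 := mul_le_mul_of_nonneg_right hMR (sq_nonneg p0)
    have harg : (p0/2)^2 * (M:ℝ) / 2 - (p0/2) * ((M:ℝ)*p0/2) ≤ -2 := by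
      have : (p0/2)^2 * (M:ℝ) / 2 - (p0/2) * ((M:ℝ)*p0/2) = -((M:ℝ) * p0^2 / 8) := by
        ring
      rw [this]
      linarith
    calc Real.exp ((p0/2)^2 * (M:ℝ) / 2 - (p0/2) * ((M:ℝ)*p0/2))
        ≤ Real.exp (-2) := Real.exp_le_exp.mpr harg
      _ ≤ 1/4 := L1.exp_neg_two_le
  have hbad2card : ((Finset.univ.filter (fun ω : L1.Om N =>
      (M:ℝ)*p0/2 ≤ ∑ k ∈ Finset.range M,
        (L1.Ex (L1.Zk N d lam k) - L1.Zk N d lam k ω))).card : ℝ) ≤ 2^N * (1/4) := by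
    calc ((Finset.univ.filter (fun ω : L1.Om N =>
        (M:ℝ)*p0/2 ≤ ∑ k ∈ Finset.range M,
          (L1.Ex (L1.Zk N d lam k) - L1.Zk N d lam k ω))).card : ℝ)
        ≤ 2^N * Real.exp ((p0/2)^2 * (M:ℝ) / 2 - (p0/2) * ((M:ℝ)*p0/2)) := htb
      _ ≤ 2^N * (1/4) := mul_le_mul_of_nonneg_left hexp2 (by positivity)
  set bad2 : Finset (L1.Om N) := Finset.univ.filter (fun ω : L1.Om N =>
      (M:ℝ)*p0/2 ≤ ∑ k ∈ Finset.range M,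
        (L1.Ex (L1.Zk N d lam k) - L1.Zk N d lam k ω)) with hbad2
  -- existence of a good ω
  obtain ⟨ω, hω⟩ : ∃ ω : L1.Om N, ω ∉ bad1 ∪ bad2 := by
    by_contra hc
    push_neg at hc
    have hsub : (Finset.univ : Finset (L1.Om N)) ⊆ bad1 ∪ bad2 := fun ω _ => hc ω
    have hle := Finset.card_le_card hsub
    rw [Finset.card_univ, L1.card_Om] at hle
    have hleR : ((2:ℝ))^N ≤ ((bad1 ∪ bad2).card : ℝ) := by
      exact_mod_cast hle
    have hcup : ((bad1 ∪ bad2).card : ℝ) ≤ (bad1.card : ℝ) + (bad2.card : ℝ) := by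
      exact_mod_cast Finset.card_union_le bad1 bad2
    have h2pow : (0:ℝ) < 2^N := by positivity
    nlinarith
  rw [Finset.mem_union] at hω
  push_neg at hω
  obtain ⟨hω1, hω2⟩ := hω
  refine ⟨L1.Cset N ω, L1.Cset_subset ω, ?_, ?_⟩
  · -- property 1
    have hgood : ∀ n ∈ Finset.range (2*N+1),
        |L1.Sn N n ω - L1.Kn N n / 4| < L1.tval N := by
      intro n hn
      by_contra hcon
      push_neg at hcon
      exact hω1 (Finset.mem_biUnion.mpr ⟨n, hn,
        Finset.mem_filter.mpr ⟨Finset.mem_univ ω, hcon⟩⟩)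
    intro n
    have hres := L1.good_R_bound hN12 ω hgood n
    have hcast : ((M:ℝ) * ((d:ℝ) + 1)) = (N:ℝ) := by
      rw [hNdef]
      push_cast
      ring
    calc |(Rf (L1.Cset N ω) n : ℝ) - Rz (L1.Cset N ω) ((n : ℤ) - 1)|
        ≤ 12 * Real.sqrt ((N:ℝ) * Real.log N) := hres
      _ = 12 * Real.sqrt ((M * (d + 1) : ℝ) * Real.log (M * (d + 1))) := by
          rw [hcast]
  · -- property 2
    have hlt : ∑ k ∈ Finset.range M,
        (L1.Ex (L1.Zk N d lam k) - L1.Zk N d lam k ω) < (M:ℝ)*p0/2 := by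
      by_contra hcon
      push_neg at hcon
      exact hω2 (Finset.mem_filter.mpr ⟨Finset.mem_univ ω, hcon⟩)
    have hEsum : (M:ℝ)*p0 ≤ ∑ k ∈ Finset.range M, L1.Ex (L1.Zk N d lam k) := by
      calc (M:ℝ)*p0 = ∑ _k ∈ Finset.range M, p0 := by
            rw [Finset.sum_const, Finset.card_range, nsmul_eq_mul]
        _ ≤ ∑ k ∈ Finset.range M, L1.Ex (L1.Zk N d lam k) :=
            Finset.sum_le_sum fun k hk =>
              L1.Ex_Zk_ge lam d k M hNdef (Finset.mem_range.mp hk) hi0d hi0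
    have hZsum : (M:ℝ)*p0/2 ≤ ∑ k ∈ Finset.range M, L1.Zk N d lam k ω := by
      have hsplit : ∑ k ∈ Finset.range M,
          (L1.Ex (L1.Zk N d lam k) - L1.Zk N d lam k ω)
          = (∑ k ∈ Finset.range M, L1.Ex (L1.Zk N d lam k))
            - ∑ k ∈ Finset.range M, L1.Zk N d lam k ω :=
        Finset.sum_sub_distrib _ _
      linarith
    rw [L1.sum_Zk_eq lam d M ω] at hZsum
    have hBf := L1.Bf_eq_card (L1.Cset N ω) lam d (N-1)
    rw [show (N-1)+1 = N from by omega] at hBf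
    have hinj : (((Finset.range M).filter (fun k =>
        (∑ i ∈ Finset.range (d+1), lam i * L1.bx ω (k*(d+1)+d-i)) ≠ 0)).card)
        ≤ ((Finset.range N).filter (fun m : ℕ =>
          ∑ i ∈ Finset.range (d+1), lam i * chi (L1.Cset N ω) ((m:ℤ) - i) ≠ 0)).card := by
      apply Finset.card_le_card_of_injOn (fun k => k*(d+1)+d)
      · intro k hk
        rw [Finset.mem_coe, Finset.mem_filter] at hk ⊢
        have hkM : k < M := Finset.mem_range.mp hk.1
        have hmN : k*(d+1)+d < N := by
          rw [hNdef]
          have h1 : (k+1)*(d+1) ≤ M*(d+1) := Nat.mul_le_mul_right (d+1) hkM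
          have h2 : (k+1)*(d+1) = k*(d+1)+d+1 := by ring
          omega
        refine ⟨Finset.mem_range.mpr hmN, ?_⟩
        have hrw : ∑ i ∈ Finset.range (d+1),
            lam i * chi (L1.Cset N ω) (((k*(d+1)+d : ℕ):ℤ) - i)
            = ∑ i ∈ Finset.range (d+1), lam i * L1.bx ω (k*(d+1)+d-i) := by
          refine Finset.sum_congr rfl fun i hi => ?_
          rw [Finset.mem_range] at hi
          rw [L1.chi_Cset ω (k*(d+1)+d) i (by omega)]
        rw [hrw]
        exact hk.2
      · intro k _ k' _ hkk
        have hkk' : k*(d+1)+d = k'*(d+1)+d := hkk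
        have hmul : k*(d+1) = k'*(d+1) := by omega
        exact Nat.eq_of_mul_eq_mul_right (by omega) hmul
    have hp2 : (M:ℝ)/2^(d+2) = (M:ℝ)*p0/2 := by
      rw [hp0, div_pow, one_pow, pow_succ]
      field_simp
    rw [hBf, hp2]
    calc (M:ℝ)*p0/2
        ≤ ((((Finset.range M).filter (fun k =>
          (∑ i ∈ Finset.range (d+1), lam i * L1.bx ω (k*(d+1)+d-i)) ≠ 0)).card : ℕ) : ℝ) :=
          hZsum
      _ ≤ (((Finset.range N).filter (fun m : ℕ =>
          ∑ i ∈ Finset.range (d+1), lam i * chi (L1.Cset N ω) ((m:ℤ) - i) ≠ 0)).card : ℝ) := by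
          exact_mod_cast hinj
end

section
/- Let S be a Sidon set of nonnegative integers, d, M positive integers, C ⊆ [0, M(d+1)-1] a finite set, S_M = S with all pairs at distance ≤ 2M(d+1) removed, and A = C + S_M. Then for every n, R_A(n) = Σ_{j=0}^{2M(d+1)} R_C(j)·R_{S_M}(n-j), and consequently for integers λ_0,...,λ_d, |Σ_{i=0}^d λ_i R_A(n-i)| ≤ 4(M+1)(d+1)·max_k |Σ_{i=0}^d λ_i R_C(k-i)|. -/
open Filter Finset
open scoped Classical

noncomputable def PF (X : Set ℕ) (n : ℕ) : Finset (ℕ × ℕ) :=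
  (Finset.range (n+1) ×ˢ Finset.range (n+1)).filter
    (fun p => p.1 ∈ X ∧ p.2 ∈ X ∧ p.1 + p.2 = n)

lemma mem_PF {X : Set ℕ} {n : ℕ} {p : ℕ × ℕ} :
    p ∈ PF X n ↔ p.1 ∈ X ∧ p.2 ∈ X ∧ p.1 + p.2 = n := by
  simp only [PF, Finset.mem_filter, Finset.mem_product, Finset.mem_range]
  constructor
  · tauto
  · rintro ⟨h1, h2, h3⟩
    exact ⟨⟨by omega, by omega⟩, h1, h2, h3⟩

lemma Rf_eq_card (X : Set ℕ) (n : ℕ) : Rf X n = (PF X n).card := by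
  have h : {p : ℕ × ℕ | p.1 ∈ X ∧ p.2 ∈ X ∧ p.1 + p.2 = n} = ↑(PF X n) := by
    ext p
    simp only [Set.mem_setOf_eq, Finset.mem_coe, mem_PF]
  rw [Rf, h, Nat.card_coe_set_eq, Set.ncard_coe_finset]

lemma Rf_mono {X Y : Set ℕ} (h : X ⊆ Y) (n : ℕ) : Rf X n ≤ Rf Y n := by
  rw [Rf_eq_card, Rf_eq_card]
  apply Finset.card_le_card
  intro p hp
  rw [mem_PF] at hp ⊢
  exact ⟨h hp.1, h hp.2.1, hp.2.2⟩

theorem stmt14 (S : Set ℕ) (hS : ∀ n, Rf S n ≤ 2)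
    (d M : ℕ) (hd : 0 < d) (hM : 0 < M)
    (C : Set ℕ) (hCfin : C.Finite) (hC : C ⊆ Set.Icc 0 (M * (d + 1) - 1))
    (SM : Set ℕ)
    (hSM : SM = {s ∈ S | ∀ t ∈ S, t ≠ s → (2 * M * (d + 1) : ℤ) < |(s : ℤ) - t|})
    (A : Set ℕ) (hA : A = Set.image2 (· + ·) C SM) :
    (∀ n : ℕ, Rf A n =
        ∑ j ∈ Finset.range (2 * M * (d + 1) + 1), Rf C j * Rz SM ((n : ℤ) - j)) ∧
    ∀ (lam : ℕ → ℤ) (K : ℝ),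
      (∀ k : ℤ, |∑ i ∈ Finset.range (d + 1), (lam i : ℝ) * Rz C (k - i)| ≤ K) →
      ∀ n : ℕ,
        |∑ i ∈ Finset.range (d + 1), (lam i : ℝ) * Rz A ((n : ℤ) - i)|
          ≤ 4 * (M + 1) * (d + 1) * K := by
  have hQpos : 0 < M * (d + 1) := by positivity
  have hSMsub : SM ⊆ S := by
    intro s hs; rw [hSM] at hs; exact hs.1
  have hCQ : ∀ c ∈ C, c < M * (d + 1) := by
    intro c hc
    have h := (hC hc).2
    exact lt_of_le_of_lt h (Nat.sub_lt hQpos one_pos)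
  have huniq : ∀ c ∈ C, ∀ s ∈ SM, ∀ c' ∈ C, ∀ s' ∈ SM,
      c + s = c' + s' → c = c' ∧ s = s' := by
    intro c hc s hs c' hc' s' hs' heq
    have hss' : s = s' := by
      by_contra hne
      have hsS := hs
      rw [hSM] at hsS
      have h2 := hsS.2 s' (hSMsub hs') (fun h => hne h.symm)
      have heqz : (s : ℤ) - s' = (c' : ℤ) - c := by push_cast at heq ⊢; omega
      rw [heqz] at h2
      have hcb := hCQ c hc
      have hc'b := hCQ c' hc'
      have habs : |(c' : ℤ) - c| < (M : ℤ) * (d + 1) := by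
        rw [abs_lt]
        constructor
        · have : (c : ℤ) < (M : ℤ) * (d + 1) := by exact_mod_cast hcb
          omega
        · have : (c' : ℤ) < (M : ℤ) * (d + 1) := by exact_mod_cast hc'b
          omega
      have hr : (2 * M * (d + 1) : ℤ) = 2 * ((M : ℤ) * (d + 1)) := by push_cast; ring
      rw [hr] at h2
      have : (0 : ℤ) < (M : ℤ) * (d + 1) := by exact_mod_cast hQpos
      linarith
    constructor
    · omega
    · exact hss'
  set T := 2 * M * (d + 1) with hTdef
  have hTQ : T = 2 * (M * (d + 1)) := by rw [hTdef]; ring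
  have hCbound : ∀ j, T < j → Rf C j = 0 := by
    intro j hj
    rw [Rf_eq_card, Finset.card_eq_zero, Finset.eq_empty_iff_forall_notMem]
    intro p hp
    rw [mem_PF] at hp
    have h1 := hCQ p.1 hp.1
    have h2 := hCQ p.2 hp.2.1
    have := hp.2.2
    omega
  -- main counting identity
  have key : ∀ n : ℕ, Rf A n = ∑ j ∈ Finset.range (T + 1), Rf C j * Rz SM ((n : ℤ) - j) := by
    intro n
    have himg : PF A n = (Finset.range (T+1)).biUnion
        (fun j => if j ≤ n then (PF C j ×ˢ PF SM (n - j)).image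
          (fun q : (ℕ × ℕ) × (ℕ × ℕ) => (q.1.1 + q.2.1, q.1.2 + q.2.2)) else ∅) := by
      ext p
      simp only [Finset.mem_biUnion, Finset.mem_range]
      constructor
      · intro hp
        rw [mem_PF, hA] at hp
        obtain ⟨h1, h2, h3⟩ := hp
        rw [Set.mem_image2] at h1 h2
        obtain ⟨c, hc, s, hs, h1⟩ := h1
        obtain ⟨c', hc', s', hs', h2⟩ := h2
        refine ⟨c + c', ?_, ?_⟩
        · have := hCQ c hc; have := hCQ c' hc'; omega
        · rw [if_pos (by omega)]
          simp only [Finset.mem_image, Finset.mem_product]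
          refine ⟨((c, c'), (s, s')), ⟨?_, ?_⟩, ?_⟩
          · exact mem_PF.mpr ⟨hc, hc', rfl⟩
          · refine mem_PF.mpr ⟨hs, hs', ?_⟩
            show s + s' = n - (c + c')
            omega
          · simp only [Prod.ext_iff]; exact ⟨h1, h2⟩
      · rintro ⟨j, hj, hpj⟩
        by_cases hjn : j ≤ n
        · rw [if_pos hjn] at hpj
          simp only [Finset.mem_image, Finset.mem_product] at hpj
          obtain ⟨q, ⟨hq1, hq2⟩, hq3⟩ := hpj
          rw [mem_PF] at hq1 hq2
          rw [mem_PF, hA]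
          subst hq3
          refine ⟨Set.mem_image2_of_mem hq1.1 hq2.1, Set.mem_image2_of_mem hq1.2.1 hq2.2.1, ?_⟩
          simp only
          have := hq1.2.2
          have := hq2.2.2
          omega
        · rw [if_neg hjn] at hpj
          exact absurd hpj (Finset.notMem_empty _)
    have hdisj : ∀ j ∈ Finset.range (T+1), ∀ j' ∈ Finset.range (T+1), j ≠ j' →
        Disjoint ((fun j => if j ≤ n then (PF C j ×ˢ PF SM (n - j)).image
          (fun q : (ℕ × ℕ) × (ℕ × ℕ) => (q.1.1 + q.2.1, q.1.2 + q.2.2)) else ∅) j)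
        ((fun j => if j ≤ n then (PF C j ×ˢ PF SM (n - j)).image
          (fun q : (ℕ × ℕ) × (ℕ × ℕ) => (q.1.1 + q.2.1, q.1.2 + q.2.2)) else ∅) j') := by
      intro j _ j' _ hne
      rw [Finset.disjoint_left]
      intro p hp hp'
      dsimp only at hp hp'
      by_cases hjn : j ≤ n
      · by_cases hj'n : j' ≤ n
        · rw [if_pos hjn] at hp
          rw [if_pos hj'n] at hp'
          simp only [Finset.mem_image, Finset.mem_product] at hp hp'
          obtain ⟨q, ⟨hq1, hq2⟩, hq3⟩ := hp
          obtain ⟨r, ⟨hr1, hr2⟩, hr3⟩ := hp'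
          rw [mem_PF] at hq1 hq2 hr1 hr2
          have e1 : q.1.1 + q.2.1 = r.1.1 + r.2.1 := by
            rw [← hr3] at hq3
            exact congrArg Prod.fst hq3
          have e2 : q.1.2 + q.2.2 = r.1.2 + r.2.2 := by
            rw [← hr3] at hq3
            exact congrArg Prod.snd hq3
          have u1 := huniq q.1.1 hq1.1 q.2.1 hq2.1 r.1.1 hr1.1 r.2.1 hr2.1 e1
          have u2 := huniq q.1.2 hq1.2.1 q.2.2 hq2.2.1 r.1.2 hr1.2.1 r.2.2 hr2.2.1 e2
          have := hq1.2.2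
          have := hr1.2.2
          omega
        · rw [if_neg hj'n] at hp'
          exact absurd hp' (Finset.notMem_empty _)
      · rw [if_neg hjn] at hp
        exact absurd hp (Finset.notMem_empty _)
    rw [Rf_eq_card, himg, Finset.card_biUnion hdisj]
    apply Finset.sum_congr rfl
    intro j hj
    by_cases hjn : j ≤ n
    · rw [if_pos hjn]
      have hinj : Set.InjOn (fun q : (ℕ × ℕ) × (ℕ × ℕ) => (q.1.1 + q.2.1, q.1.2 + q.2.2))
          ↑(PF C j ×ˢ PF SM (n - j)) := by
        intro q hq r hr heq
        rw [Finset.mem_coe, Finset.mem_product] at hq hr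
        obtain ⟨hq1, hq2⟩ := hq
        obtain ⟨hr1, hr2⟩ := hr
        rw [mem_PF] at hq1 hq2 hr1 hr2
        simp only [Prod.ext_iff] at heq
        have u1 := huniq q.1.1 hq1.1 q.2.1 hq2.1 r.1.1 hr1.1 r.2.1 hr2.1 heq.1
        have u2 := huniq q.1.2 hq1.2.1 q.2.2 hq2.2.1 r.1.2 hr1.2.1 r.2.2 hr2.2.1 heq.2
        have : q.1 = r.1 := Prod.ext u1.1 u2.1
        have : q.2 = r.2 := Prod.ext u1.2 u2.2
        exact Prod.ext ‹q.1 = r.1› ‹q.2 = r.2›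
      rw [Finset.card_image_of_injOn hinj, Finset.card_product]
      have hz : Rz SM ((n : ℤ) - j) = Rf SM (n - j) := by
        rw [Rz, if_pos (by omega)]
        congr 1
        omega
      rw [hz, Rf_eq_card, Rf_eq_card]
    · rw [if_neg hjn]
      have hz : Rz SM ((n : ℤ) - j) = 0 := by
        rw [Rz, if_neg (by omega)]
      rw [hz, Finset.card_empty, Nat.mul_zero]
  refine ⟨key, ?_⟩
  -- Part 2
  intro lam K hK n
  have hKnn : 0 ≤ K := le_trans (abs_nonneg _) (hK 0)
  have hRzSM2 : ∀ k : ℤ, Rz SM k ≤ 2 := by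
    intro k
    rw [Rz]
    split
    · exact le_trans (Rf_mono hSMsub _) (hS _)
    · omega
  have hRzA : ∀ k : ℤ, (Rz A k : ℝ) =
      ∑ j ∈ Finset.range (T + 1), (Rf C j : ℝ) * (Rz SM (k - j) : ℝ) := by
    intro k
    by_cases hk : 0 ≤ k
    · obtain ⟨m, rfl⟩ := Int.eq_ofNat_of_zero_le hk
      rw [Rz, if_pos (by positivity), Int.toNat_natCast, key m]
      push_cast
      rfl
    · rw [Rz, if_neg hk]
      simp only [Nat.cast_zero]
      symm
      apply Finset.sum_eq_zero
      intro j hj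
      have hz : Rz SM (k - (j:ℤ)) = 0 := by
        rw [Rz, if_neg (by omega)]
      rw [hz]
      simp
  set L := T + d with hLdef
  have swap : ∑ i ∈ Finset.range (d+1), (lam i : ℝ) * Rz A ((n:ℤ) - i)
      = ∑ t ∈ Finset.range (L+1), (Rz SM ((n:ℤ) - t) : ℝ) *
          ∑ i ∈ Finset.range (d+1), (lam i : ℝ) * Rz C ((t:ℤ) - i) := by
    have step1 : ∀ i ∈ Finset.range (d+1),
        (lam i : ℝ) * Rz A ((n:ℤ) - i)
          = ∑ t ∈ Finset.range (L+1),
              (lam i : ℝ) * (Rz C ((t:ℤ) - i) : ℝ) * (Rz SM ((n:ℤ) - t) : ℝ) := by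
      intro i hi
      rw [Finset.mem_range] at hi
      rw [hRzA ((n:ℤ) - i), Finset.mul_sum]
      have hsub : (Finset.range (T+1)).image (fun j => i + j) ⊆ Finset.range (L+1) := by
        intro t ht
        rw [Finset.mem_image] at ht
        obtain ⟨j, hj, rfl⟩ := ht
        rw [Finset.mem_range] at hj ⊢
        omega
      have hzero : ∀ t ∈ Finset.range (L+1), t ∉ (Finset.range (T+1)).image (fun j => i + j) →
          (lam i : ℝ) * (Rz C ((t:ℤ) - i) : ℝ) * (Rz SM ((n:ℤ) - t) : ℝ) = 0 := by
        intro t ht hnt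
        rw [Finset.mem_image] at hnt
        push_neg at hnt
        have hz : Rz C ((t:ℤ) - i) = 0 := by
          by_cases hti : i ≤ t
          · have hne := hnt (t - i)
            by_cases htT : t - i ≤ T
            · exact absurd (by omega) (hne (Finset.mem_range.mpr (by omega)))
            · rw [Rz, if_pos (by omega)]
              have h3 : ((t:ℤ) - i).toNat = t - i := by omega
              rw [h3]
              exact hCbound _ (by omega)
          · rw [Rz, if_neg (by omega)]
        rw [hz]
        simp
      rw [← Finset.sum_subset hsub hzero]
      rw [Finset.sum_image (by intro x _ y _ h; simp only at h; omega)]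
      apply Finset.sum_congr rfl
      intro j hj
      have h1 : Rz C ((↑(i + j):ℤ) - i) = Rf C j := by
        rw [Rz, if_pos (by push_cast; omega)]
        congr 1
        push_cast
        omega
      rw [h1]
      have h2 : (n:ℤ) - ↑(i + j) = (n:ℤ) - i - j := by push_cast; ring
      rw [h2]
      ring
    rw [Finset.sum_congr rfl step1, Finset.sum_comm]
    apply Finset.sum_congr rfl
    intro t ht
    rw [Finset.mul_sum]
    apply Finset.sum_congr rfl
    intro i hi
    ring
  rw [swap]
  have habs := Finset.abs_sum_le_sum_abs
    (fun t : ℕ => (Rz SM ((n:ℤ) - t) : ℝ) *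
        ∑ i ∈ Finset.range (d+1), (lam i : ℝ) * Rz C ((t:ℤ) - i))
    (Finset.range (L+1))
  refine le_trans habs ?_
  have hterm : ∀ t ∈ Finset.range (L+1),
      |(Rz SM ((n:ℤ) - t) : ℝ) * ∑ i ∈ Finset.range (d+1), (lam i : ℝ) * Rz C ((t:ℤ) - i)|
        ≤ 2 * K := by
    intro t ht
    rw [abs_mul, abs_of_nonneg (by positivity)]
    have h1 : |∑ i ∈ Finset.range (d+1), (lam i : ℝ) * Rz C ((t:ℤ) - i)| ≤ K := hK t
    have h2 : (Rz SM ((n:ℤ) - t) : ℝ) ≤ 2 := by exact_mod_cast hRzSM2 _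
    calc (Rz SM ((n:ℤ) - t) : ℝ) * |_| ≤ (Rz SM ((n:ℤ) - t) : ℝ) * K := by
          exact mul_le_mul_of_nonneg_left h1 (by positivity)
      _ ≤ 2 * K := mul_le_mul_of_nonneg_right h2 hKnn
  refine le_trans (Finset.sum_le_sum hterm) ?_
  rw [Finset.sum_const, Finset.card_range, nsmul_eq_mul]
  have hL : ((L:ℝ) + 1) * (2 * K) ≤ 4 * (M + 1) * (d + 1) * K := by
    have hcoef : ((L:ℝ) + 1) * 2 ≤ 4 * ((M:ℝ) + 1) * ((d:ℝ) + 1) := by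
      have : (L : ℝ) = 2 * M * (d + 1) + d := by
        rw [hLdef, hTdef]; push_cast; ring
      rw [this]
      nlinarith [Nat.cast_nonneg (α := ℝ) d, Nat.cast_nonneg (α := ℝ) M]
    calc ((L:ℝ) + 1) * (2 * K) = (((L:ℝ) + 1) * 2) * K := by ring
      _ ≤ (4 * ((M:ℝ) + 1) * ((d:ℝ) + 1)) * K := mul_le_mul_of_nonneg_right hcoef hKnn
      _ = 4 * (M + 1) * (d + 1) * K := by push_cast; ring
  calc (↑(L+1) : ℝ) * (2 * K) = ((L:ℝ) + 1) * (2 * K) := by push_cast; ring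
    _ ≤ _ := hL
end
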